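/- arXiv:math/0607673 — 4 statements merged into one kernel-verified Lean document; each statement's English description precedes it below -/
import Mathlib

section
/- Let σ and σ' be involutions of {1,…,n} and 1 ≤ i ≤ j ≤ n, and set m := j − i + 1. Define involutions δ and δ' of {1,…,m} by δ(a) = σ(a+i−1) − i + 1 if both a+i−1 and σ(a+i−1) lie in {i,…,j} and δ(a) = a otherwise (and similarly δ' from σ'). If the vanishing ideal of the intersection of the Zariski closures of B·N_σ and B·N_{σ'} (in the n×n setting) is a prime ideal, then the vanishing ideal of the intersection of the Zariski closures of B'·N_δ and B'·N_{δ'} (in the m×m setting, B' being the invertible upper-triangular m×m matrices) is a prime ideal. -/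
open Matrix

/-- A matrix is strictly upper-triangular. -/
def StrictUpper {n : ℕ} (x : Matrix (Fin n) (Fin n) ℂ) : Prop :=
  ∀ a b : Fin n, b ≤ a → x a b = 0

/-- A matrix is (weakly) upper-triangular. -/
def UpperTri {n : ℕ} (x : Matrix (Fin n) (Fin n) ℂ) : Prop :=
  ∀ a b : Fin n, b < a → x a b = 0

/-- The orbit of a matrix under conjugation by invertible upper-triangular matrices. -/
def Borbit {n : ℕ} (x : Matrix (Fin n) (Fin n) ℂ) : Set (Matrix (Fin n) (Fin n) ℂ) :=
  {y | ∃ b : Matrix (Fin n) (Fin n) ℂ, IsUnit b ∧ UpperTri b ∧ y = b * x * b⁻¹}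

/-- A permutation is an involution. -/
def IsInvol {n : ℕ} (σ : Equiv.Perm (Fin n)) : Prop := σ * σ = 1

/-- The strictly upper-triangular part `N_σ` of the permutation matrix of `σ`. -/
def Nmat {n : ℕ} (σ : Equiv.Perm (Fin n)) : Matrix (Fin n) (Fin n) ℂ :=
  Matrix.of fun a b => if a < b ∧ σ a = b then (1 : ℂ) else 0

/-- The submatrix `π_{i,j}(x)` on rows and columns `i,…,j` (1-based), for `1 ≤ i ≤ j ≤ n`. -/
def blk {n : ℕ} (x : Matrix (Fin n) (Fin n) ℂ) (i j : ℕ)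
    (h1 : 1 ≤ i) (h2 : i ≤ j) (h3 : j ≤ n) :
    Matrix (Fin (j + 1 - i)) (Fin (j + 1 - i)) ℂ :=
  Matrix.of fun a b =>
    x ⟨i - 1 + a.1, by have := a.2; omega⟩ ⟨i - 1 + b.1, by have := b.2; omega⟩

/-- The rank matrix of `N_σ` (1-based indices, 0 outside the range `1 ≤ i < j ≤ n`). -/
noncomputable def Rfun {n : ℕ} (σ : Equiv.Perm (Fin n)) : ℕ → ℕ → ℕ := fun i j =>
  if h : 1 ≤ i ∧ i < j ∧ j ≤ n then (blk (Nmat σ) i j h.1 h.2.1.le h.2.2).rank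
  else 0

/-- The number of two-cycles of an involution. -/
def numCycles {n : ℕ} (σ : Equiv.Perm (Fin n)) : ℕ :=
  (Finset.univ.filter fun a : Fin n => a < σ a).card

/-- Evaluation of a polynomial in the matrix entries at a matrix. -/
noncomputable def evalMat {n : ℕ} (x : Matrix (Fin n) (Fin n) ℂ)
    (f : MvPolynomial (Fin n × Fin n) ℂ) : ℂ :=
  MvPolynomial.eval (fun p => x p.1 p.2) f

/-- The vanishing ideal of a set of matrices. -/
noncomputable def vanishingIdeal {n : ℕ} (S : Set (Matrix (Fin n) (Fin n) ℂ)) :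
    Ideal (MvPolynomial (Fin n × Fin n) ℂ) where
  carrier := {f | ∀ x ∈ S, evalMat x f = 0}
  add_mem' := by
    intro a b ha hb x hx
    simp only [evalMat, map_add] at *
    rw [ha x hx, hb x hx, add_zero]
  zero_mem' := by
    intro x hx
    simp [evalMat]
  smul_mem' := by
    intro c f hf x hx
    simp only [evalMat, smul_eq_mul, _root_.map_mul] at *
    rw [hf x hx, mul_zero]

/-- The Zariski closure of a set of matrices: the common zero set of its vanishing ideal. -/
noncomputable def zclosure {n : ℕ} (S : Set (Matrix (Fin n) (Fin n) ℂ)) :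
    Set (Matrix (Fin n) (Fin n) ℂ) :=
  {x | ∀ f ∈ vanishingIdeal S, evalMat x f = 0}

/-- The space of upper-triangular matrices commuting with a given matrix
(the Lie algebra of the stabilizer of `N` in `B`). -/
noncomputable def commUT {n : ℕ} (N : Matrix (Fin n) (Fin n) ℂ) :
    Submodule ℂ (Matrix (Fin n) (Fin n) ℂ) where
  carrier := {z | UpperTri z ∧ z * N = N * z}
  add_mem' := by
    rintro a b ⟨ha1, ha2⟩ ⟨hb1, hb2⟩
    refine ⟨fun p q h => ?_, by rw [add_mul, mul_add, ha2, hb2]⟩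
    simp [Matrix.add_apply, ha1 p q h, hb1 p q h]
  zero_mem' := ⟨fun p q h => rfl, by simp⟩
  smul_mem' := by
    rintro c a ⟨ha1, ha2⟩
    refine ⟨fun p q h => ?_, by rw [Matrix.smul_mul, Matrix.mul_smul, ha2]⟩
    simp [Matrix.smul_apply, ha1 p q h]


namespace S14

variable {n i j : ℕ}


theorem upperTri_mul {u v : Matrix (Fin n) (Fin n) ℂ} (hu : UpperTri u) (hv : UpperTri v) :
    UpperTri (u * v) := by
  intro a b hba
  rw [Matrix.mul_apply]
  refine Finset.sum_eq_zero fun k _ => ?_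
  rcases lt_or_ge k a with h | h
  · rw [hu a k h, zero_mul]
  · rw [hv k b (lt_of_lt_of_le hba h), mul_zero]

theorem strictUpper_upperTri {x : Matrix (Fin n) (Fin n) ℂ} (h : StrictUpper x) : UpperTri x :=
  fun a b hba => h a b hba.le

theorem upperTri_mul_strict {u v : Matrix (Fin n) (Fin n) ℂ} (hu : UpperTri u)
    (hv : StrictUpper v) : StrictUpper (u * v) := by
  intro a b hba
  rw [Matrix.mul_apply]
  refine Finset.sum_eq_zero fun k _ => ?_
  rcases lt_or_ge k a with h | h
  · rw [hu a k h, zero_mul]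
  · rw [hv k b (le_trans hba h), mul_zero]

theorem strictUpper_mul_tri {u v : Matrix (Fin n) (Fin n) ℂ} (hu : StrictUpper u)
    (hv : UpperTri v) : StrictUpper (u * v) := by
  intro a b hba
  rw [Matrix.mul_apply]
  refine Finset.sum_eq_zero fun k _ => ?_
  rcases le_or_gt k a with h | h
  · rw [hu a k h, zero_mul]
  · rw [hv k b (lt_of_le_of_lt hba h), mul_zero]

theorem upperTri_iff_blockTriangular {x : Matrix (Fin n) (Fin n) ℂ} :
    UpperTri x ↔ x.BlockTriangular id := Iff.rfl

theorem upperTri_inv {b : Matrix (Fin n) (Fin n) ℂ} (hb : IsUnit b) (htri : UpperTri b) :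
    UpperTri b⁻¹ := by
  cases hb.nonempty_invertible
  exact Matrix.blockTriangular_inv_of_blockTriangular htri


def ιf (hi : 1 ≤ i) (hij : i ≤ j) (hj : j ≤ n) : Fin (j + 1 - i) → Fin n := fun a =>
  ⟨(a : ℕ) + (i - 1), by have := a.2; exact lt_of_lt_of_le (by omega : (a : ℕ) + (i - 1) < j) hj⟩

theorem ιf_injective (hi : 1 ≤ i) (hij : i ≤ j) (hj : j ≤ n) :
    Function.Injective (ιf hi hij hj) := by
  intro a b hab
  have : (a : ℕ) + (i-1) = (b : ℕ) + (i-1) := congrArg Fin.val hab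
  exact Fin.ext (by omega)

def subM (hi : 1 ≤ i) (hij : i ≤ j) (hj : j ≤ n) (x : Matrix (Fin n) (Fin n) ℂ) :
    Matrix (Fin (j + 1 - i)) (Fin (j + 1 - i)) ℂ :=
  Matrix.of fun a b => x (ιf hi hij hj a) (ιf hi hij hj b)

theorem subM_one (hi : 1 ≤ i) (hij : i ≤ j) (hj : j ≤ n) :
    subM hi hij hj (1 : Matrix (Fin n) (Fin n) ℂ) = 1 := by
  ext a b
  simp only [subM, Matrix.of_apply, Matrix.one_apply]
  by_cases h : a = b
  · simp [h]
  · rw [if_neg h, if_neg (fun hc => h (ιf_injective hi hij hj hc))]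

theorem subM_mul (hi : 1 ≤ i) (hij : i ≤ j) (hj : j ≤ n) {u v : Matrix (Fin n) (Fin n) ℂ}
    (hu : UpperTri u) (hv : UpperTri v) :
    subM hi hij hj (u * v) = subM hi hij hj u * subM hi hij hj v := by
  ext a b
  simp only [subM, Matrix.of_apply, Matrix.mul_apply]
  rw [show (∑ c : Fin (j+1-i), u (ιf hi hij hj a) (ιf hi hij hj c) * v (ιf hi hij hj c) (ιf hi hij hj b))
      = ∑ k ∈ Finset.univ.image (ιf hi hij hj), u (ιf hi hij hj a) k * v k (ιf hi hij hj b) from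
    (Finset.sum_image (f := fun k => u (ιf hi hij hj a) k * v k (ιf hi hij hj b)) (g := ιf hi hij hj) (fun x _ y _ h => ιf_injective hi hij hj h)).symm]
  symm
  apply Finset.sum_subset (Finset.subset_univ _)
  intro k _ hk
  have hk' : (k : ℕ) < i - 1 ∨ j ≤ (k : ℕ) := by
    by_contra hc
    push_neg at hc
    exact hk (Finset.mem_image.2 ⟨⟨(k : ℕ) - (i-1), by omega⟩, Finset.mem_univ _,
      Fin.ext (by simp [ιf]; omega)⟩)
  rcases hk' with h | h
  · rw [hu _ k (by simp [ιf, Fin.lt_def]; omega), zero_mul]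
  · rw [hv k _ (by simp [ιf, Fin.lt_def]; omega), mul_zero]


theorem StrictUpper.upperTri' {x : Matrix (Fin n) (Fin n) ℂ}
    (h : ∀ a b : Fin n, b ≤ a → x a b = 0) : UpperTri x :=
  fun a b hba => h a b hba.le

theorem subM_upperTri (hi : 1 ≤ i) (hij : i ≤ j) (hj : j ≤ n)
    {b : Matrix (Fin n) (Fin n) ℂ} (hbt : UpperTri b) : UpperTri (subM hi hij hj b) := by
  intro a c hca
  refine hbt _ _ ?_
  rw [Fin.lt_def]
  show (c : ℕ) + (i-1) < (a : ℕ) + (i-1)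
  omega

theorem subM_inv (hi : 1 ≤ i) (hij : i ≤ j) (hj : j ≤ n)
    {b : Matrix (Fin n) (Fin n) ℂ} (hb : IsUnit b) (hbt : UpperTri b)
    (hbit : UpperTri b⁻¹) :
    IsUnit (subM hi hij hj b) ∧ (subM hi hij hj b)⁻¹ = subM hi hij hj b⁻¹ := by
  have hdet : IsUnit b.det := (Matrix.isUnit_iff_isUnit_det b).mp hb
  have h1 : subM hi hij hj b * subM hi hij hj b⁻¹ = 1 := by
    rw [← subM_mul hi hij hj hbt hbit, Matrix.mul_nonsing_inv b hdet, subM_one]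
  have h2 : subM hi hij hj b⁻¹ * subM hi hij hj b = 1 := by
    rw [← subM_mul hi hij hj hbit hbt, Matrix.nonsing_inv_mul b hdet, subM_one]
  exact ⟨⟨⟨_, _, h1, h2⟩, rfl⟩, Matrix.inv_eq_right_inv h1⟩

theorem subM_conj (hi : 1 ≤ i) (hij : i ≤ j) (hj : j ≤ n)
    {b x : Matrix (Fin n) (Fin n) ℂ} (hb : IsUnit b) (hbt : UpperTri b)
    (hx : StrictUpper x) :
    subM hi hij hj (b * x * b⁻¹) =
      subM hi hij hj b * subM hi hij hj x * (subM hi hij hj b)⁻¹ := by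
  have hbit : UpperTri b⁻¹ := upperTri_inv hb hbt
  have hxt : UpperTri x := strictUpper_upperTri hx
  rw [subM_mul hi hij hj (upperTri_mul hbt hxt) hbit, subM_mul hi hij hj hbt hxt,
    (subM_inv hi hij hj hb hbt hbit).2]


theorem strictUpper_Nmat (σ : Equiv.Perm (Fin n)) : StrictUpper (Nmat σ) := by
  intro a b hba
  simp only [Nmat, Matrix.of_apply, ite_eq_right_iff]
  intro ⟨h1, _⟩
  exact absurd hba (not_le.2 h1)

theorem borbit_strictUpper {N x : Matrix (Fin n) (Fin n) ℂ} (hN : StrictUpper N)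
    (hx : x ∈ Borbit N) : StrictUpper x := by
  obtain ⟨b, hb, hbt, rfl⟩ := hx
  exact strictUpper_mul_tri (upperTri_mul_strict hbt hN) (upperTri_inv hb hbt)

theorem subM_Nmat (hi : 1 ≤ i) (hij : i ≤ j) (hj : j ≤ n)
    (σ : Equiv.Perm (Fin n)) (δ : Equiv.Perm (Fin (j + 1 - i)))
    (hδ : ∀ a : Fin (j + 1 - i), ((δ a : Fin (j + 1 - i)) : ℕ) =
      if i ≤ ((σ ⟨(a : ℕ) + (i - 1), by have := a.2; exact lt_of_lt_of_le (by omega : (a : ℕ) + (i - 1) < j) hj⟩ : Fin n) : ℕ) + 1 ∧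
         ((σ ⟨(a : ℕ) + (i - 1), by have := a.2; exact lt_of_lt_of_le (by omega : (a : ℕ) + (i - 1) < j) hj⟩ : Fin n) : ℕ) + 1 ≤ j
      then ((σ ⟨(a : ℕ) + (i - 1), by have := a.2; exact lt_of_lt_of_le (by omega : (a : ℕ) + (i - 1) < j) hj⟩ : Fin n) : ℕ) - (i - 1)
      else (a : ℕ)) :
    subM hi hij hj (Nmat σ) = Nmat δ := by
  ext a b
  have ha : ((ιf hi hij hj a : Fin n) : ℕ) = (a : ℕ) + (i - 1) := rfl
  have hδa := hδ a
  have hιa : (⟨(a : ℕ) + (i - 1), by have := a.2; omega⟩ : Fin n) = ιf hi hij hj a := rfl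
  rw [hιa] at hδa
  simp only [subM, Matrix.of_apply, Nmat]
  by_cases hcond : ιf hi hij hj a < ιf hi hij hj b ∧ σ (ιf hi hij hj a) = ιf hi hij hj b
  · rw [if_pos hcond]
    have hlt : (a : ℕ) < (b : ℕ) := by
      have := hcond.1; rw [Fin.lt_def] at this
      simpa [ιf] using (by omega : (a:ℕ) + (i-1) < (b:ℕ) + (i-1) → (a:ℕ) < (b:ℕ)) (by exact this)
    have hval : ((σ (ιf hi hij hj a) : Fin n) : ℕ) = (b : ℕ) + (i - 1) := by
      rw [hcond.2]; rfl
    have hb2 := b.2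
    rw [hval] at hδa
    rw [if_pos (by omega)] at hδa
    have : δ a = b := Fin.ext (by omega)
    rw [if_pos ⟨Fin.lt_def.2 hlt, this⟩]
  · rw [if_neg hcond]
    by_cases hab : a < b ∧ δ a = b
    · exfalso
      obtain ⟨hab1, hab2⟩ := hab
      by_cases hc : i ≤ ((σ (ιf hi hij hj a) : Fin n) : ℕ) + 1 ∧
          ((σ (ιf hi hij hj a) : Fin n) : ℕ) + 1 ≤ j
      · rw [if_pos hc] at hδa
        apply hcond
        have hb2 : ((δ a : Fin (j+1-i)) : ℕ) = (b : ℕ) := by rw [hab2]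
        constructor
        · rw [Fin.lt_def]
          show (a : ℕ) + (i-1) < (b : ℕ) + (i-1)
          have := Fin.lt_def.1 hab1; omega
        · apply Fin.ext
          show ((σ (ιf hi hij hj a) : Fin n) : ℕ) = (b : ℕ) + (i - 1)
          omega
      · rw [if_neg hc] at hδa
        have : (δ a : ℕ) = (b : ℕ) := by rw [hab2]
        have := Fin.lt_def.1 hab1
        omega
    · rw [if_neg hab]

def bbOf (hi : 1 ≤ i) (hij : i ≤ j) (hj : j ≤ n)
    (D : Matrix (Fin (j + 1 - i)) (Fin (j + 1 - i)) ℂ) : Matrix (Fin n) (Fin n) ℂ :=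
  Matrix.of fun p q =>
    if h : (i - 1 ≤ (p : ℕ) ∧ (p : ℕ) < j) ∧ (i - 1 ≤ (q : ℕ) ∧ (q : ℕ) < j)
    then D ⟨(p : ℕ) - (i - 1), by omega⟩ ⟨(q : ℕ) - (i - 1), by omega⟩
    else if p = q then 1 else 0

theorem bbOf_not_left (hi : 1 ≤ i) (hij : i ≤ j) (hj : j ≤ n)
    (D : Matrix (Fin (j + 1 - i)) (Fin (j + 1 - i)) ℂ) {p q : Fin n}
    (hp : ¬(i - 1 ≤ (p : ℕ) ∧ (p : ℕ) < j)) :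
    bbOf hi hij hj D p q = if p = q then 1 else 0 := by
  simp only [bbOf, Matrix.of_apply]
  rw [dif_neg (fun hc => hp hc.1)]

theorem bbOf_not_right (hi : 1 ≤ i) (hij : i ≤ j) (hj : j ≤ n)
    (D : Matrix (Fin (j + 1 - i)) (Fin (j + 1 - i)) ℂ) {p q : Fin n}
    (hq : ¬(i - 1 ≤ (q : ℕ) ∧ (q : ℕ) < j)) :
    bbOf hi hij hj D p q = if p = q then 1 else 0 := by
  simp only [bbOf, Matrix.of_apply]
  rw [dif_neg (fun hc => hq hc.2)]

theorem bbOf_mul (hi : 1 ≤ i) (hij : i ≤ j) (hj : j ≤ n)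
    (D E : Matrix (Fin (j + 1 - i)) (Fin (j + 1 - i)) ℂ) :
    bbOf hi hij hj D * bbOf hi hij hj E = bbOf hi hij hj (D * E) := by
  ext p q
  rw [Matrix.mul_apply]
  by_cases hp : (i - 1 ≤ (p : ℕ) ∧ (p : ℕ) < j)
  · by_cases hq : (i - 1 ≤ (q : ℕ) ∧ (q : ℕ) < j)
    · -- both middle
      rw [show bbOf hi hij hj (D * E) p q
          = (D * E) ⟨(p : ℕ) - (i - 1), by omega⟩ ⟨(q : ℕ) - (i - 1), by omega⟩ from
        dif_pos ⟨hp, hq⟩]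
      rw [Matrix.mul_apply]
      rw [show (∑ c : Fin (j+1-i), D ⟨(p : ℕ) - (i - 1), by omega⟩ c * E c ⟨(q : ℕ) - (i - 1), by omega⟩)
          = ∑ c : Fin (j+1-i), bbOf hi hij hj D p (ιf hi hij hj c) * bbOf hi hij hj E (ιf hi hij hj c) q from
        Finset.sum_congr rfl (fun c _ => by
          have hc : (i - 1 ≤ ((ιf hi hij hj c : Fin n) : ℕ) ∧ ((ιf hi hij hj c : Fin n) : ℕ) < j) := by
            have := c.2
            constructor
            · show i - 1 ≤ (c : ℕ) + (i - 1); omega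
            · show (c : ℕ) + (i - 1) < j; omega
          rw [show bbOf hi hij hj D p (ιf hi hij hj c)
              = D ⟨(p : ℕ) - (i - 1), by omega⟩ ⟨((ιf hi hij hj c : Fin n) : ℕ) - (i - 1), by omega⟩ from
            dif_pos ⟨hp, hc⟩]
          rw [show bbOf hi hij hj E (ιf hi hij hj c) q
              = E ⟨((ιf hi hij hj c : Fin n) : ℕ) - (i - 1), by omega⟩ ⟨(q : ℕ) - (i - 1), by omega⟩ from
            dif_pos ⟨hc, hq⟩]
          congr 2 <;> exact Fin.ext (by show (c:ℕ) = ((c:ℕ) + (i-1)) - (i-1); omega))]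
      rw [show (∑ c : Fin (j+1-i), bbOf hi hij hj D p (ιf hi hij hj c) * bbOf hi hij hj E (ιf hi hij hj c) q)
          = ∑ k ∈ Finset.univ.image (ιf hi hij hj),
              bbOf hi hij hj D p k * bbOf hi hij hj E k q from
        (Finset.sum_image (f := fun k => bbOf hi hij hj D p k * bbOf hi hij hj E k q)
          (g := ιf hi hij hj) (fun x _ y _ h => ιf_injective hi hij hj h)).symm]
      symm
      apply Finset.sum_subset (Finset.subset_univ _)
      intro k _ hk
      have hk' : ¬(i - 1 ≤ (k : ℕ) ∧ (k : ℕ) < j) := by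
        intro hc
        exact hk (Finset.mem_image.2 ⟨⟨(k : ℕ) - (i-1), by omega⟩, Finset.mem_univ _,
          Fin.ext (by show (k:ℕ) - (i-1) + (i-1) = (k:ℕ); omega)⟩)
      rw [bbOf_not_right hi hij hj D hk', if_neg (fun hc : p = k => hk' (hc ▸ hp)), zero_mul]
    · -- p middle, q not
      rw [bbOf_not_right hi hij hj (D * E) hq]
      rw [Finset.sum_eq_single q
        (fun k _ hkq => by rw [bbOf_not_right hi hij hj E hq, if_neg hkq, mul_zero])
        (fun h => absurd (Finset.mem_univ q) h)]
      rw [bbOf_not_right hi hij hj E hq, if_pos rfl, mul_one,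
        bbOf_not_right hi hij hj D hq]
  · rw [bbOf_not_left hi hij hj (D * E) hp]
    rw [Finset.sum_eq_single p
      (fun k _ hkp => by rw [bbOf_not_left hi hij hj D hp, if_neg (fun h => hkp h.symm), zero_mul])
      (fun h => absurd (Finset.mem_univ p) h)]
    rw [bbOf_not_left hi hij hj D hp, if_pos rfl, one_mul,
      bbOf_not_left hi hij hj E hp]

theorem bbOf_one (hi : 1 ≤ i) (hij : i ≤ j) (hj : j ≤ n) :
    bbOf hi hij hj (1 : Matrix (Fin (j + 1 - i)) (Fin (j + 1 - i)) ℂ) = 1 := by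
  ext p q
  simp only [bbOf, Matrix.of_apply]
  by_cases h : (i - 1 ≤ (p : ℕ) ∧ (p : ℕ) < j) ∧ (i - 1 ≤ (q : ℕ) ∧ (q : ℕ) < j)
  · rw [dif_pos h, Matrix.one_apply, Matrix.one_apply]
    by_cases hpq : p = q
    · rw [if_pos hpq, if_pos (by subst hpq; rfl)]
    · rw [if_neg hpq, if_neg (fun hc => hpq (Fin.ext (by
        have : (p : ℕ) - (i-1) = (q : ℕ) - (i-1) := congrArg Fin.val hc
        omega)))]
  · rw [dif_neg h, Matrix.one_apply]

theorem bbOf_upperTri (hi : 1 ≤ i) (hij : i ≤ j) (hj : j ≤ n)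
    {D : Matrix (Fin (j + 1 - i)) (Fin (j + 1 - i)) ℂ} (hD : UpperTri D) :
    UpperTri (bbOf hi hij hj D) := by
  intro p q hqp
  simp only [bbOf, Matrix.of_apply]
  by_cases h : (i - 1 ≤ (p : ℕ) ∧ (p : ℕ) < j) ∧ (i - 1 ≤ (q : ℕ) ∧ (q : ℕ) < j)
  · rw [dif_pos h]
    apply hD
    rw [Fin.lt_def]
    show (q : ℕ) - (i-1) < (p : ℕ) - (i-1)
    have := Fin.lt_def.1 hqp
    omega
  · rw [dif_neg h, if_neg (fun hc => absurd hqp (by rw [hc]; exact lt_irrefl q))]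

theorem bbOf_isUnit (hi : 1 ≤ i) (hij : i ≤ j) (hj : j ≤ n)
    {D : Matrix (Fin (j + 1 - i)) (Fin (j + 1 - i)) ℂ} (hD : IsUnit D) :
    IsUnit (bbOf hi hij hj D) ∧ (bbOf hi hij hj D)⁻¹ = bbOf hi hij hj D⁻¹ := by
  have hdet : IsUnit D.det := (Matrix.isUnit_iff_isUnit_det D).mp hD
  have h1 : bbOf hi hij hj D * bbOf hi hij hj D⁻¹ = 1 := by
    rw [bbOf_mul, Matrix.mul_nonsing_inv D hdet, bbOf_one]
  have h2 : bbOf hi hij hj D⁻¹ * bbOf hi hij hj D = 1 := by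
    rw [bbOf_mul, Matrix.nonsing_inv_mul D hdet, bbOf_one]
  exact ⟨⟨⟨_, _, h1, h2⟩, rfl⟩, Matrix.inv_eq_right_inv h1⟩

theorem subM_bbOf (hi : 1 ≤ i) (hij : i ≤ j) (hj : j ≤ n)
    (D : Matrix (Fin (j + 1 - i)) (Fin (j + 1 - i)) ℂ) :
    subM hi hij hj (bbOf hi hij hj D) = D := by
  ext a b
  simp only [subM, Matrix.of_apply]
  have ha := a.2; have hb := b.2
  rw [show bbOf hi hij hj D (ιf hi hij hj a) (ιf hi hij hj b)
      = D ⟨((ιf hi hij hj a : Fin n) : ℕ) - (i-1), by show ((a:ℕ) + (i-1)) - (i-1) < j+1-i; omega⟩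
          ⟨((ιf hi hij hj b : Fin n) : ℕ) - (i-1), by show ((b:ℕ) + (i-1)) - (i-1) < j+1-i; omega⟩ from
    dif_pos ⟨⟨by show i-1 ≤ (a:ℕ)+(i-1); omega, by show (a:ℕ)+(i-1) < j; omega⟩,
             ⟨by show i-1 ≤ (b:ℕ)+(i-1); omega, by show (b:ℕ)+(i-1) < j; omega⟩⟩]
  congr 1 <;> exact Fin.ext (by simp [ιf])

theorem subM_image_borbit (hi : 1 ≤ i) (hij : i ≤ j) (hj : j ≤ n)
    (σ : Equiv.Perm (Fin n)) (δ : Equiv.Perm (Fin (j + 1 - i)))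
    (hN : subM hi hij hj (Nmat σ) = Nmat δ) :
    subM hi hij hj '' Borbit (Nmat σ) = Borbit (Nmat δ) := by
  apply Set.eq_of_subset_of_subset
  · rintro y ⟨x, ⟨b, hb, hbt, rfl⟩, rfl⟩
    refine ⟨subM hi hij hj b, (subM_inv hi hij hj hb hbt (upperTri_inv hb hbt)).1,
      subM_upperTri hi hij hj hbt, ?_⟩
    rw [subM_conj hi hij hj hb hbt (strictUpper_Nmat σ), hN]
  · rintro y ⟨D, hD, hDt, rfl⟩
    refine ⟨bbOf hi hij hj D * Nmat σ * (bbOf hi hij hj D)⁻¹,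
      ⟨bbOf hi hij hj D, (bbOf_isUnit hi hij hj hD).1, bbOf_upperTri hi hij hj hDt, rfl⟩, ?_⟩
    rw [subM_conj hi hij hj (bbOf_isUnit hi hij hj hD).1 (bbOf_upperTri hi hij hj hDt)
      (strictUpper_Nmat σ), subM_bbOf, hN]

/-! ### Polynomial transfer maps -/

def ρf (hi : 1 ≤ i) (hij : i ≤ j) (hj : j ≤ n) :
    Fin (j + 1 - i) × Fin (j + 1 - i) → Fin n × Fin n :=
  fun p => (ιf hi hij hj p.1, ιf hi hij hj p.2)

theorem evalMat_eq_aeval {x : Matrix (Fin n) (Fin n) ℂ} {f : MvPolynomial (Fin n × Fin n) ℂ} :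
    evalMat x f = MvPolynomial.aeval (fun p : Fin n × Fin n => x p.1 p.2) f := by
  rw [evalMat, ← MvPolynomial.coe_aeval_eq_eval]; rfl

theorem evalMat_rename (hi : 1 ≤ i) (hij : i ≤ j) (hj : j ≤ n)
    (x : Matrix (Fin n) (Fin n) ℂ) (f : MvPolynomial (Fin (j + 1 - i) × Fin (j + 1 - i)) ℂ) :
    evalMat x (MvPolynomial.rename (ρf hi hij hj) f) = evalMat (subM hi hij hj x) f := by
  rw [evalMat, evalMat, MvPolynomial.eval_rename]
  rfl

def embM (hi : 1 ≤ i) (hij : i ≤ j) (hj : j ≤ n)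
    (y : Matrix (Fin (j + 1 - i)) (Fin (j + 1 - i)) ℂ) : Matrix (Fin n) (Fin n) ℂ :=
  Matrix.of fun p q =>
    if h : (i - 1 ≤ (p : ℕ) ∧ (p : ℕ) < j) ∧ (i - 1 ≤ (q : ℕ) ∧ (q : ℕ) < j)
    then y ⟨(p : ℕ) - (i - 1), by omega⟩ ⟨(q : ℕ) - (i - 1), by omega⟩
    else 0

theorem subM_embM (hi : 1 ≤ i) (hij : i ≤ j) (hj : j ≤ n)
    (y : Matrix (Fin (j + 1 - i)) (Fin (j + 1 - i)) ℂ) :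
    subM hi hij hj (embM hi hij hj y) = y := by
  ext a b
  simp only [subM, Matrix.of_apply]
  have ha := a.2; have hb := b.2
  rw [show embM hi hij hj y (ιf hi hij hj a) (ιf hi hij hj b)
      = y ⟨((ιf hi hij hj a : Fin n) : ℕ) - (i-1), by show ((a:ℕ) + (i-1)) - (i-1) < j+1-i; omega⟩
          ⟨((ιf hi hij hj b : Fin n) : ℕ) - (i-1), by show ((b:ℕ) + (i-1)) - (i-1) < j+1-i; omega⟩ from
    dif_pos ⟨⟨by show i-1 ≤ (a:ℕ)+(i-1); omega, by show (a:ℕ)+(i-1) < j; omega⟩,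
             ⟨by show i-1 ≤ (b:ℕ)+(i-1); omega, by show (b:ℕ)+(i-1) < j; omega⟩⟩]
  congr 1 <;> exact Fin.ext (by show (_ : ℕ) = _; simp [ιf])

noncomputable def Gf (hi : 1 ≤ i) (hij : i ≤ j) (hj : j ≤ n) :
    Fin n × Fin n → MvPolynomial (Fin (j + 1 - i) × Fin (j + 1 - i)) ℂ := fun p =>
  if h : (i - 1 ≤ (p.1 : ℕ) ∧ (p.1 : ℕ) < j) ∧ (i - 1 ≤ (p.2 : ℕ) ∧ (p.2 : ℕ) < j)
  then MvPolynomial.X (⟨(p.1 : ℕ) - (i - 1), by omega⟩, ⟨(p.2 : ℕ) - (i - 1), by omega⟩)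
  else 0

theorem evalMat_Gf (hi : 1 ≤ i) (hij : i ≤ j) (hj : j ≤ n)
    (y : Matrix (Fin (j + 1 - i)) (Fin (j + 1 - i)) ℂ) (f : MvPolynomial (Fin n × Fin n) ℂ) :
    evalMat y (MvPolynomial.aeval (Gf hi hij hj) f) = evalMat (embM hi hij hj y) f := by
  rw [evalMat_eq_aeval, evalMat_eq_aeval,
    MvPolynomial.comp_aeval_apply (f := Gf hi hij hj)
      (MvPolynomial.aeval fun p : Fin (j+1-i) × Fin (j+1-i) => y p.1 p.2) f]
  have hfun : (fun p : Fin n × Fin n =>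
      (MvPolynomial.aeval fun p : Fin (j+1-i) × Fin (j+1-i) => y p.1 p.2) (Gf hi hij hj p))
      = fun p : Fin n × Fin n => embM hi hij hj y p.1 p.2 := by
    funext p
    simp only [Gf]
    by_cases h : (i - 1 ≤ (p.1 : ℕ) ∧ (p.1 : ℕ) < j) ∧ (i - 1 ≤ (p.2 : ℕ) ∧ (p.2 : ℕ) < j)
    · rw [dif_pos h, MvPolynomial.aeval_X]
      simp only [embM, Matrix.of_apply]
      rw [dif_pos h]
    · rw [dif_neg h, map_zero]
      simp only [embM, Matrix.of_apply]
      rw [dif_neg h]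
  rw [hfun]

/-! ### The degeneration to the middle block -/

def wt (i j p : ℕ) : ℤ :=
  if p < i - 1 then (i : ℤ) - 1 - p else if p < j then 0 else (j : ℤ) - 1 - p

def ef (i j p q : ℕ) : ℕ := (wt i j p - wt i j q).toNat

theorem wt_mid {p : ℕ} (hp : i - 1 ≤ p ∧ p < j) : wt i j p = 0 := by
  simp only [wt]
  rw [if_neg (by omega), if_pos hp.2]

theorem ef_mid {p q : ℕ} (hp : i - 1 ≤ p ∧ p < j) (hq : i - 1 ≤ q ∧ q < j) :
    ef i j p q = 0 := by
  rw [ef, wt_mid hp, wt_mid hq]; rfl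

theorem wt_pos (hij : i ≤ j) {p q : ℕ} (hpq : p < q)
    (h : ¬((i - 1 ≤ p ∧ p < j) ∧ (i - 1 ≤ q ∧ q < j))) :
    0 < wt i j p - wt i j q := by
  simp only [wt]
  split_ifs <;> omega

theorem ef_eq_zero_iff (hij : i ≤ j) {p q : ℕ} (hpq : p < q) :
    ef i j p q = 0 ↔ ((i - 1 ≤ p ∧ p < j) ∧ (i - 1 ≤ q ∧ q < j)) := by
  constructor
  · intro h0
    by_contra hc
    have := wt_pos hij hpq hc
    simp only [ef] at h0
    omega
  · intro h
    exact ef_mid h.1 h.2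

theorem ct_mem_borbit (hi : 1 ≤ i) (hij : i ≤ j) (hj : j ≤ n)
    {N x : Matrix (Fin n) (Fin n) ℂ} (hN : StrictUpper N) (hx : x ∈ Borbit N)
    {t : ℂ} (ht : t ≠ 0) :
    (Matrix.of fun p q : Fin n => x p q * t ^ ef i j (p : ℕ) (q : ℕ)) ∈ Borbit N := by
  obtain ⟨b, hb, hbt, rfl⟩ := hx
  have hxs : StrictUpper (b * N * b⁻¹) :=
    strictUpper_mul_tri (upperTri_mul_strict hbt hN) (upperTri_inv hb hbt)
  set d : Matrix (Fin n) (Fin n) ℂ := Matrix.diagonal (fun p : Fin n => t ^ wt i j (p : ℕ))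
  have hd1 : d * Matrix.diagonal (fun p : Fin n => t ^ (-wt i j (p : ℕ))) = 1 := by
    rw [Matrix.diagonal_mul_diagonal]
    rw [show (fun p : Fin n => t ^ wt i j (p:ℕ) * t ^ (-wt i j (p:ℕ))) = fun _ => (1:ℂ) from
      funext fun p => by rw [← zpow_add₀ ht]; simp]
    exact Matrix.diagonal_one
  have hd2 : Matrix.diagonal (fun p : Fin n => t ^ (-wt i j (p : ℕ))) * d = 1 := by
    rw [Matrix.diagonal_mul_diagonal]
    rw [show (fun p : Fin n => t ^ (-wt i j (p:ℕ)) * t ^ (wt i j (p:ℕ))) = fun _ => (1:ℂ) from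
      funext fun p => by rw [← zpow_add₀ ht]; simp]
    exact Matrix.diagonal_one
  have hdu : IsUnit d := ⟨⟨_, _, hd1, hd2⟩, rfl⟩
  have hdinv : d⁻¹ = Matrix.diagonal (fun p : Fin n => t ^ (-wt i j (p : ℕ))) :=
    Matrix.inv_eq_right_inv hd1
  have hdt : UpperTri d := fun p q hqp => Matrix.diagonal_apply_ne _ (ne_of_gt hqp)
  refine ⟨d * b, hdu.mul hb, upperTri_mul hdt hbt, ?_⟩
  rw [Matrix.mul_inv_rev]
  rw [show d * b * N * (b⁻¹ * d⁻¹) = d * (b * N * b⁻¹ * d⁻¹) by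
    simp only [Matrix.mul_assoc]]
  ext p q
  rw [Matrix.diagonal_mul, hdinv, Matrix.mul_diagonal]
  show (b * N * b⁻¹) p q * t ^ ef i j (p : ℕ) (q : ℕ)
    = t ^ wt i j (p : ℕ) * ((b * N * b⁻¹) p q * t ^ (-wt i j (q : ℕ)))
  by_cases hz : (b * N * b⁻¹) p q = 0
  · rw [hz]; ring
  · have hpq : p < q := by
      by_contra hc
      exact hz (hxs p q (not_lt.1 hc))
    have hpq' : (p : ℕ) < (q : ℕ) := Fin.lt_def.1 hpq
    by_cases hmid : ((i - 1 ≤ (p:ℕ) ∧ (p:ℕ) < j) ∧ (i - 1 ≤ (q:ℕ) ∧ (q:ℕ) < j))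
    · rw [ef_mid hmid.1 hmid.2, wt_mid hmid.1, wt_mid hmid.2]
      simp
    · have hw := wt_pos hij hpq' hmid
      rw [show (t : ℂ) ^ ef i j (p:ℕ) (q:ℕ) = t ^ (wt i j (p:ℕ) - wt i j (q:ℕ)) by
        rw [ef, ← zpow_natCast, Int.toNat_of_nonneg (le_of_lt hw)]]
      rw [zpow_sub₀ ht, _root_.zpow_neg]
      field_simp

theorem mem_vanishingIdeal_iff {S : Set (Matrix (Fin n) (Fin n) ℂ)}
    {f : MvPolynomial (Fin n × Fin n) ℂ} :
    f ∈ vanishingIdeal S ↔ ∀ x ∈ S, evalMat x f = 0 := Iff.rfl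

theorem mem_zclosure_iff {S : Set (Matrix (Fin n) (Fin n) ℂ)} {x : Matrix (Fin n) (Fin n) ℂ} :
    x ∈ zclosure S ↔ ∀ f ∈ vanishingIdeal S, evalMat x f = 0 := Iff.rfl

theorem ct_zero (hi : 1 ≤ i) (hij : i ≤ j) (hj : j ≤ n)
    {x : Matrix (Fin n) (Fin n) ℂ} (hx : StrictUpper x) :
    (Matrix.of fun p q : Fin n => x p q * (0:ℂ) ^ ef i j (p : ℕ) (q : ℕ))
      = embM hi hij hj (subM hi hij hj x) := by
  ext p q
  simp only [Matrix.of_apply, embM]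
  by_cases h : (i - 1 ≤ (p : ℕ) ∧ (p : ℕ) < j) ∧ (i - 1 ≤ (q : ℕ) ∧ (q : ℕ) < j)
  · rw [dif_pos h, ef_mid h.1 h.2, pow_zero, mul_one]
    show x p q = x (ιf hi hij hj ⟨(p:ℕ) - (i-1), _⟩) (ιf hi hij hj ⟨(q:ℕ) - (i-1), _⟩)
    congr 1 <;> exact Fin.ext (by show (_ : ℕ) = _ ; simp [ιf]; omega)
  · rw [dif_neg h]
    by_cases hpq : p < q
    · rw [zero_pow, mul_zero]
      intro h0
      exact h ((ef_eq_zero_iff hij (Fin.lt_def.1 hpq)).1 h0)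
    · rw [hx p q (not_lt.1 hpq), zero_mul]

theorem embM_subM_mem_zclosure (hi : 1 ≤ i) (hij : i ≤ j) (hj : j ≤ n)
    (σ : Equiv.Perm (Fin n)) {x : Matrix (Fin n) (Fin n) ℂ} (hx : x ∈ Borbit (Nmat σ)) :
    embM hi hij hj (subM hi hij hj x) ∈ zclosure (Borbit (Nmat σ)) := by
  rw [mem_zclosure_iff]
  intro f hf
  have hxs := borbit_strictUpper (strictUpper_Nmat σ) hx
  set F : (Fin n × Fin n) → Polynomial ℂ := fun p =>
    Polynomial.C (x p.1 p.2) * Polynomial.X ^ ef i j (p.1 : ℕ) (p.2 : ℕ) with hF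
  have hq : ∀ t : ℂ, Polynomial.eval t (MvPolynomial.aeval F f)
      = evalMat (Matrix.of fun p q : Fin n => x p q * t ^ ef i j (p:ℕ) (q:ℕ)) f := by
    intro t
    rw [evalMat_eq_aeval, ← Polynomial.coe_aeval_eq_eval]
    rw [show ((Polynomial.aeval t : Polynomial ℂ →ₐ[ℂ] ℂ) ((MvPolynomial.aeval F) f))
        = (MvPolynomial.aeval fun p => (Polynomial.aeval t : Polynomial ℂ →ₐ[ℂ] ℂ) (F p)) f from
      MvPolynomial.comp_aeval_apply (f := F) (Polynomial.aeval t) f]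
    have : (fun p : Fin n × Fin n => (Polynomial.aeval t : Polynomial ℂ →ₐ[ℂ] ℂ) (F p))
        = fun p : Fin n × Fin n =>
            (Matrix.of fun a b : Fin n => x a b * t ^ ef i j (a:ℕ) (b:ℕ)) p.1 p.2 := by
      funext p
      simp [hF]
    rw [this]
  have hvanish : MvPolynomial.aeval F f = 0 := by
    apply Polynomial.eq_zero_of_infinite_isRoot
    apply Set.Infinite.mono (s := {t : ℂ | t ≠ 0})
    · intro t ht
      show Polynomial.IsRoot _ t
      rw [Polynomial.IsRoot, hq t]
      exact hf _ (ct_mem_borbit hi hij hj (strictUpper_Nmat σ) hx ht)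
    · exact Set.Finite.infinite_compl (Set.finite_singleton 0)
  have h0 := hq 0
  rw [hvanish, Polynomial.eval_zero, ct_zero hi hij hj hxs] at h0
  exact h0.symm

theorem subM_mem_zclosure (hi : 1 ≤ i) (hij : i ≤ j) (hj : j ≤ n)
    (σ : Equiv.Perm (Fin n)) (δ : Equiv.Perm (Fin (j + 1 - i)))
    (hN : subM hi hij hj (Nmat σ) = Nmat δ)
    {x : Matrix (Fin n) (Fin n) ℂ} (hx : x ∈ zclosure (Borbit (Nmat σ))) :
    subM hi hij hj x ∈ zclosure (Borbit (Nmat δ)) := by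
  rw [mem_zclosure_iff]
  intro g hg
  have hmem : MvPolynomial.rename (ρf hi hij hj) g ∈ vanishingIdeal (Borbit (Nmat σ)) := by
    rw [mem_vanishingIdeal_iff]
    intro z hz
    rw [evalMat_rename]
    exact hg _ (by
      rw [← subM_image_borbit hi hij hj σ δ hN]
      exact ⟨z, hz, rfl⟩)
  rw [← evalMat_rename]
  exact hx _ hmem

theorem embM_mem_zclosure (hi : 1 ≤ i) (hij : i ≤ j) (hj : j ≤ n)
    (σ : Equiv.Perm (Fin n)) (δ : Equiv.Perm (Fin (j + 1 - i)))
    (hN : subM hi hij hj (Nmat σ) = Nmat δ)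
    {y : Matrix (Fin (j + 1 - i)) (Fin (j + 1 - i)) ℂ}
    (hy : y ∈ zclosure (Borbit (Nmat δ))) :
    embM hi hij hj y ∈ zclosure (Borbit (Nmat σ)) := by
  rw [mem_zclosure_iff]
  intro f hf
  have hmem : MvPolynomial.aeval (Gf hi hij hj) f ∈ vanishingIdeal (Borbit (Nmat δ)) := by
    rw [mem_vanishingIdeal_iff]
    intro z hz
    rw [← subM_image_borbit hi hij hj σ δ hN] at hz
    obtain ⟨x', hx', rfl⟩ := hz
    rw [evalMat_Gf]
    exact embM_subM_mem_zclosure hi hij hj σ hx' f hf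
  have := hy _ hmem
  rwa [evalMat_Gf] at this

end S14

/-- irreducibility of the intersection passes to the restricted
involutions `π_{i,j}(σ)`, `π_{i,j}(σ')` in size `m = j − i + 1`. -/
theorem stmt14 (n : ℕ) (hn : 1 ≤ n) (σ σ' : Equiv.Perm (Fin n))
    (hσ : IsInvol σ) (hσ' : IsInvol σ')
    (i j : ℕ) (hi : 1 ≤ i) (hij : i ≤ j) (hj : j ≤ n)
    (δ δ' : Equiv.Perm (Fin (j + 1 - i)))
    (hδ : ∀ a : Fin (j + 1 - i), ((δ a : Fin (j + 1 - i)) : ℕ) =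
      if i ≤ ((σ ⟨(a : ℕ) + (i - 1), by have := a.2; omega⟩ : Fin n) : ℕ) + 1 ∧
         ((σ ⟨(a : ℕ) + (i - 1), by have := a.2; omega⟩ : Fin n) : ℕ) + 1 ≤ j
      then ((σ ⟨(a : ℕ) + (i - 1), by have := a.2; omega⟩ : Fin n) : ℕ) - (i - 1)
      else (a : ℕ))
    (hδ' : ∀ a : Fin (j + 1 - i), ((δ' a : Fin (j + 1 - i)) : ℕ) =
      if i ≤ ((σ' ⟨(a : ℕ) + (i - 1), by have := a.2; omega⟩ : Fin n) : ℕ) + 1 ∧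
         ((σ' ⟨(a : ℕ) + (i - 1), by have := a.2; omega⟩ : Fin n) : ℕ) + 1 ≤ j
      then ((σ' ⟨(a : ℕ) + (i - 1), by have := a.2; omega⟩ : Fin n) : ℕ) - (i - 1)
      else (a : ℕ))
    (hprime : (vanishingIdeal
      (zclosure (Borbit (Nmat σ)) ∩ zclosure (Borbit (Nmat σ')))).IsPrime) :
    (vanishingIdeal
      (zclosure (Borbit (Nmat δ)) ∩ zclosure (Borbit (Nmat δ')))).IsPrime := by
  classical
  have hNδ : S14.subM hi hij hj (Nmat σ) = Nmat δ := S14.subM_Nmat hi hij hj σ δ hδ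
  have hNδ' : S14.subM hi hij hj (Nmat σ') = Nmat δ' := S14.subM_Nmat hi hij hj σ' δ' hδ'
  have key : vanishingIdeal
      (zclosure (Borbit (Nmat δ)) ∩ zclosure (Borbit (Nmat δ')))
      = Ideal.comap (MvPolynomial.rename (S14.ρf hi hij hj))
        (vanishingIdeal (zclosure (Borbit (Nmat σ)) ∩ zclosure (Borbit (Nmat σ')))) := by
    apply le_antisymm
    · intro f hf
      rw [Ideal.mem_comap, S14.mem_vanishingIdeal_iff]
      intro x hx
      rw [S14.evalMat_rename]
      exact hf _ ⟨S14.subM_mem_zclosure hi hij hj σ δ hNδ hx.1,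
        S14.subM_mem_zclosure hi hij hj σ' δ' hNδ' hx.2⟩
    · intro f hf
      rw [Ideal.mem_comap, S14.mem_vanishingIdeal_iff] at hf
      rw [S14.mem_vanishingIdeal_iff]
      intro y hy
      have := hf (S14.embM hi hij hj y)
        ⟨S14.embM_mem_zclosure hi hij hj σ δ hNδ hy.1,
         S14.embM_mem_zclosure hi hij hj σ' δ' hNδ' hy.2⟩
      rwa [S14.evalMat_rename, S14.subM_embM] at this
  rw [key]
  haveI := hprime
  exact Ideal.IsPrime.comap _
end

section
/- Let σ be an involution of {1,…,n} and 1 ≤ i < j ≤ n. If (R_σ)_{i,j} = (R_σ)_{i,j−1} + 1 (two horizontally consecutive entries differ by one), then (R_σ)_{i',j} = (R_σ)_{i',j−1} + 1 for every 1 ≤ i' ≤ i. Similarly, if (R_σ)_{i,j} = (R_σ)_{i+1,j} + 1 (two vertically consecutive entries differ by one), then (R_σ)_{i,j'} = (R_σ)_{i+1,j'} + 1 for every j ≤ j' ≤ n. -/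
open Matrix

lemma rank_partial_perm {m : ℕ} (M : Matrix (Fin m) (Fin m) ℂ) (g : Fin m → Fin m)
    (T : Finset (Fin m)) (hg : Set.InjOn g T)
    (hcol : ∀ b ∈ T, ∀ a, M a b = if a = g b then 1 else 0)
    (hzero : ∀ b, b ∉ T → ∀ a, M a b = 0) :
    M.rank = T.card := by
  classical
  rw [Matrix.rank_eq_finrank_span_cols]
  set S : Finset (Fin m → ℂ) := T.image (fun b => Pi.single (g b) (1:ℂ)) with hS
  have hcol' : ∀ b ∈ T, Mᵀ b = Pi.single (g b) (1:ℂ) := by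
    intro b hb
    ext a
    simp [Matrix.transpose_apply, hcol b hb a, Pi.single_apply]
  have hspan : Submodule.span ℂ (Set.range Mᵀ) = Submodule.span ℂ (S : Set (Fin m → ℂ)) := by
    apply le_antisymm
    · rw [Submodule.span_le]
      rintro _ ⟨b, rfl⟩
      by_cases hb : b ∈ T
      · apply Submodule.subset_span
        simp only [hS, Finset.coe_image, Set.mem_image, Finset.mem_coe]
        exact ⟨b, hb, (hcol' b hb).symm⟩
      · have h0 : Mᵀ b = 0 := by ext a; simp [Matrix.transpose_apply, hzero b hb a]
        rw [h0]; exact Submodule.zero_mem _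
    · rw [Submodule.span_le]
      intro v hv
      simp only [hS, Finset.coe_image, Set.mem_image, Finset.mem_coe] at hv
      obtain ⟨b, hb, rfl⟩ := hv
      exact Submodule.subset_span ⟨b, hcol' b hb⟩
  have hsub : (S : Set (Fin m → ℂ)) ⊆ Set.range (Pi.basisFun ℂ (Fin m)) := by
    intro v hv
    rw [hS, Finset.coe_image] at hv
    obtain ⟨b, hb, rfl⟩ := hv
    exact ⟨g b, by simp⟩
  have hli := (Pi.basisFun ℂ (Fin m)).linearIndependent.linearIndepOn_id.mono hsub
  change Module.finrank ℂ (Submodule.span ℂ (Set.range Mᵀ)) = T.card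
  rw [hspan, finrank_span_finset_eq_card hli]
  apply Finset.card_image_of_injOn
  intro x hx y hy hxy
  apply hg hx hy
  by_contra hne
  have h1 := congrFun hxy (g y)
  simp only [Pi.single_apply, if_neg (fun h : g y = g x => hne h.symm), if_pos rfl] at h1
  exact zero_ne_one h1

/-- 1-based count of pairs `σ c < c` lying in the window. -/
def cnt {n : ℕ} (σ : Equiv.Perm (Fin n)) (i j : ℕ) : ℕ :=
  (Finset.univ.filter fun c : Fin n =>
    ((σ c : ℕ) < (c : ℕ) ∧ i ≤ (σ c : ℕ) + 1 ∧ (c : ℕ) + 1 ≤ j)).card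

lemma invol_apply {n : ℕ} {σ : Equiv.Perm (Fin n)} (hσ : IsInvol σ) (x : Fin n) :
    σ (σ x) = x := by
  have := congrArg (fun τ : Equiv.Perm (Fin n) => τ x) hσ
  simpa using this

lemma Rfun_eq_cnt {n : ℕ} (σ : Equiv.Perm (Fin n)) (hσ : IsInvol σ) {i j : ℕ}
    (hi : 1 ≤ i) (hij : i ≤ j) (hj : j ≤ n) : Rfun σ i j = cnt σ i j := by
  classical
  have hinv := invol_apply hσ
  rcases eq_or_lt_of_le hij with rfl | hlt
  · rw [Rfun, dif_neg (by omega)]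
    symm
    rw [cnt, Finset.card_eq_zero, Finset.filter_eq_empty_iff]
    intro c _
    simp only [not_and]
    intro h1 h2
    omega
  · rw [Rfun, dif_pos ⟨hi, hlt, hj⟩]
    set m := j + 1 - i with hm
    have hm2 : 2 ≤ m := by omega
    set row : Fin m → Fin n := fun b => ⟨i - 1 + b.1, by have := b.2; omega⟩ with hrow
    set g : Fin m → Fin m := fun b =>
      ⟨min ((σ (row b) : ℕ) - (i - 1)) (j - i),
        lt_of_le_of_lt (min_le_right _ _) (by omega)⟩ with hgdef
    set T : Finset (Fin m) := Finset.univ.filter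
      (fun b : Fin m => (σ (row b) : ℕ) < (row b : ℕ) ∧ i ≤ (σ (row b) : ℕ) + 1) with hT
    have hblk : ∀ a b : Fin m, blk (Nmat σ) i j hi hlt.le hj a b
        = if (row a : ℕ) < (row b : ℕ) ∧ σ (row a) = row b then 1 else 0 := by
      intro a b
      simp only [blk, Nmat, Matrix.of_apply, hrow, Fin.lt_def]
    -- key fact about g on T
    have hgval : ∀ b ∈ T, (g b : ℕ) = (σ (row b) : ℕ) - (i - 1) := by
      intro b hb
      rw [hT, Finset.mem_filter] at hb
      obtain ⟨-, h1, h2⟩ := hb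
      have hb1 : (row b : ℕ) = i - 1 + b.1 := rfl
      have hb2 := b.2
      simp only [hgdef]
      omega
    have hrowg : ∀ b ∈ T, row (g b) = σ (row b) := by
      intro b hb
      rw [hT, Finset.mem_filter] at hb
      obtain ⟨-, h1, h2⟩ := hb
      have := hgval b (by rw [hT, Finset.mem_filter]; exact ⟨Finset.mem_univ _, h1, h2⟩)
      apply Fin.ext
      show (i - 1 + (g b).1 : ℕ) = _
      omega
    rw [rank_partial_perm (blk (Nmat σ) i j hi hlt.le hj) g T]
    · -- T.card = cnt σ i j
      rw [cnt]
      apply Finset.card_bij (fun b _ => row b)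
      · intro b hb
        rw [hT, Finset.mem_filter] at hb
        obtain ⟨-, h1, h2⟩ := hb
        rw [Finset.mem_filter]
        refine ⟨Finset.mem_univ _, h1, h2, ?_⟩
        show (i - 1 + b.1 : ℕ) + 1 ≤ j
        have := b.2
        omega
      · intro b hb b' hb' hbb
        have : (row b : ℕ) = (row b' : ℕ) := by rw [hbb]
        have hb1 : (row b : ℕ) = i - 1 + b.1 := rfl
        have hb2 : (row b' : ℕ) = i - 1 + b'.1 := rfl
        apply Fin.ext
        omega
      · intro c hc
        rw [Finset.mem_filter] at hc
        obtain ⟨-, h1, h2, h3⟩ := hc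
        refine ⟨⟨(c : ℕ) - (i - 1), by omega⟩, ?_, ?_⟩
        · have hre : row ⟨(c : ℕ) - (i - 1), by omega⟩ = c := by
            apply Fin.ext
            show (i - 1 + ((c : ℕ) - (i - 1)) : ℕ) = c
            omega
          rw [hT, Finset.mem_filter, hre]
          exact ⟨Finset.mem_univ _, h1, h2⟩
        · apply Fin.ext
          show (i - 1 + ((c : ℕ) - (i - 1)) : ℕ) = c
          omega
    · -- InjOn
      intro b hb b' hb' hbb
      rw [Finset.mem_coe] at hb hb'
      have e1 := hrowg b hb
      have e2 := hrowg b' hb'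
      have : σ (row b) = σ (row b') := by rw [← e1, ← e2, hbb]
      have hre : row b = row b' := σ.injective this
      have hb1 : (row b : ℕ) = i - 1 + b.1 := rfl
      have hb2 : (row b' : ℕ) = i - 1 + b'.1 := rfl
      have : (row b : ℕ) = (row b' : ℕ) := by rw [hre]
      apply Fin.ext
      omega
    · -- hcol
      intro b hb a
      rw [hblk]
      by_cases hab : a = g b
      · subst hab
        rw [if_pos, if_pos rfl]
        have e1 := hrowg b hb
        rw [hT, Finset.mem_filter] at hb
        obtain ⟨-, h1, h2⟩ := hb
        constructor
        · rw [e1]; exact h1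
        · rw [e1, hinv]
      · rw [if_neg hab, if_neg]
        rintro ⟨hlt', heq⟩
        apply hab
        have : row a = σ (row b) := by rw [← heq, hinv]
        have hval : (row a : ℕ) = (σ (row b) : ℕ) := by rw [this]
        have hmem : b ∈ T := by
          rw [hT, Finset.mem_filter]
          refine ⟨Finset.mem_univ _, ?_, ?_⟩
          · omega
          · have ha1 : (row a : ℕ) = i - 1 + a.1 := rfl
            omega
        have := hgval b hmem
        have ha1 : (row a : ℕ) = i - 1 + a.1 := rfl
        apply Fin.ext
        omega
    · -- hzero
      intro b hb a
      rw [hblk, if_neg]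
      rintro ⟨hlt', heq⟩
      apply hb
      have : row a = σ (row b) := by rw [← heq, hinv]
      have hval : (row a : ℕ) = (σ (row b) : ℕ) := by rw [this]
      rw [hT, Finset.mem_filter]
      have ha1 : (row a : ℕ) = i - 1 + a.1 := rfl
      exact ⟨Finset.mem_univ _, by omega, by omega⟩

lemma cnt_split_j {n : ℕ} (σ : Equiv.Perm (Fin n)) (i j : ℕ) (cJ : Fin n)
    (hcJ : (cJ : ℕ) = j - 1) (hj1 : 1 ≤ j) :
    cnt σ i j = cnt σ i (j - 1) +
      (if (σ cJ : ℕ) < j - 1 ∧ i ≤ (σ cJ : ℕ) + 1 then 1 else 0) := by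
  classical
  rw [cnt, cnt]
  have hsplit : (Finset.univ.filter fun c : Fin n =>
      ((σ c : ℕ) < (c : ℕ) ∧ i ≤ (σ c : ℕ) + 1 ∧ (c : ℕ) + 1 ≤ j)) =
      (Finset.univ.filter fun c : Fin n =>
      ((σ c : ℕ) < (c : ℕ) ∧ i ≤ (σ c : ℕ) + 1 ∧ (c : ℕ) + 1 ≤ j - 1)) ∪
      (Finset.univ.filter fun c : Fin n =>
      ((σ c : ℕ) < (c : ℕ) ∧ i ≤ (σ c : ℕ) + 1 ∧ (c : ℕ) = j - 1)) := by
    ext c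
    simp only [Finset.mem_filter, Finset.mem_union, Finset.mem_univ, true_and]
    omega
  rw [hsplit, Finset.card_union_of_disjoint]
  · congr 1
    have h2 : (Finset.univ.filter fun c : Fin n =>
        ((σ c : ℕ) < (c : ℕ) ∧ i ≤ (σ c : ℕ) + 1 ∧ (c : ℕ) = j - 1)) =
        if (σ cJ : ℕ) < j - 1 ∧ i ≤ (σ cJ : ℕ) + 1 then {cJ} else ∅ := by
      split_ifs with h
      · ext c
        simp only [Finset.mem_filter, Finset.mem_univ, true_and, Finset.mem_singleton]
        constructor
        · rintro ⟨h1, h2, h3⟩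
          exact Fin.ext (by omega)
        · rintro rfl
          exact ⟨by omega, h.2, hcJ⟩
      · ext c
        simp only [Finset.mem_filter, Finset.mem_univ, true_and, Finset.notMem_empty,
          iff_false, not_and]
        intro h1 h2 h3
        apply h
        have hcc : c = cJ := Fin.ext (by omega)
        rw [← hcc]
        exact ⟨by omega, h2⟩
    rw [h2]
    split_ifs <;> simp
  · rw [Finset.disjoint_left]
    intro c hc hc'
    simp only [Finset.mem_filter, Finset.mem_univ, true_and] at hc hc'
    omega

lemma cnt_split_i {n : ℕ} (σ : Equiv.Perm (Fin n)) (hσ : IsInvol σ) (i j : ℕ) (dI : Fin n)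
    (hdI : (dI : ℕ) = i - 1) (hi1 : 1 ≤ i) :
    cnt σ i j = cnt σ (i + 1) j +
      (if i - 1 < (σ dI : ℕ) ∧ (σ dI : ℕ) + 1 ≤ j then 1 else 0) := by
  classical
  have hinv := invol_apply hσ
  rw [cnt, cnt]
  have hsplit : (Finset.univ.filter fun c : Fin n =>
      ((σ c : ℕ) < (c : ℕ) ∧ i ≤ (σ c : ℕ) + 1 ∧ (c : ℕ) + 1 ≤ j)) =
      (Finset.univ.filter fun c : Fin n =>
      ((σ c : ℕ) < (c : ℕ) ∧ i + 1 ≤ (σ c : ℕ) + 1 ∧ (c : ℕ) + 1 ≤ j)) ∪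
      (Finset.univ.filter fun c : Fin n =>
      ((σ c : ℕ) < (c : ℕ) ∧ (σ c : ℕ) = i - 1 ∧ (c : ℕ) + 1 ≤ j)) := by
    ext c
    simp only [Finset.mem_filter, Finset.mem_union, Finset.mem_univ, true_and]
    omega
  rw [hsplit, Finset.card_union_of_disjoint]
  · congr 1
    have h2 : (Finset.univ.filter fun c : Fin n =>
        ((σ c : ℕ) < (c : ℕ) ∧ (σ c : ℕ) = i - 1 ∧ (c : ℕ) + 1 ≤ j)) =
        if i - 1 < (σ dI : ℕ) ∧ (σ dI : ℕ) + 1 ≤ j then {σ dI} else ∅ := by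
      have key : ∀ c : Fin n, (σ c : ℕ) = i - 1 → c = σ dI := by
        intro c hc
        have hcd : σ c = dI := Fin.ext (by omega)
        rw [← hcd, hinv]
      split_ifs with h
      · ext c
        simp only [Finset.mem_filter, Finset.mem_univ, true_and, Finset.mem_singleton]
        constructor
        · rintro ⟨h1, h2, h3⟩
          exact key c h2
        · rintro rfl
          have hss : (σ (σ dI) : ℕ) = (dI : ℕ) := by rw [hinv]
          exact ⟨by omega, by omega, by omega⟩
      · ext c
        simp only [Finset.mem_filter, Finset.mem_univ, true_and, Finset.notMem_empty,
          iff_false, not_and]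
        intro h1 h2 h3
        apply h
        have hcc : c = σ dI := key c h2
        rw [← hcc]
        constructor <;> omega
    rw [h2]
    split_ifs <;> simp
  · rw [Finset.disjoint_left]
    intro c hc hc'
    simp only [Finset.mem_filter, Finset.mem_univ, true_and] at hc hc'
    omega


/-- propagation of jumps in the rank matrix (Remark 5 of the paper). -/
theorem stmt15 (n : ℕ) (hn : 1 ≤ n) (σ : Equiv.Perm (Fin n)) (hσ : IsInvol σ)
    (i j : ℕ) (hi : 1 ≤ i) (hij : i < j) (hj : j ≤ n) :
    (Rfun σ i j = Rfun σ i (j - 1) + 1 →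
      ∀ i', 1 ≤ i' → i' ≤ i → Rfun σ i' j = Rfun σ i' (j - 1) + 1) ∧
    (Rfun σ i j = Rfun σ (i + 1) j + 1 →
      ∀ j', j ≤ j' → j' ≤ n → Rfun σ i j' = Rfun σ (i + 1) j' + 1) := by
  set cJ : Fin n := ⟨j - 1, by omega⟩ with hcJ
  set dI : Fin n := ⟨i - 1, by omega⟩ with hdI
  constructor
  · intro h i' hi'1 hi'i
    have e1 : cnt σ i j = cnt σ i (j - 1) + 1 := by
      rw [← Rfun_eq_cnt σ hσ hi hij.le hj, ← Rfun_eq_cnt σ hσ hi (by omega) (by omega)]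
      exact h
    have e2 := cnt_split_j σ i j cJ rfl (by omega)
    have hcond : (σ cJ : ℕ) < j - 1 ∧ i ≤ (σ cJ : ℕ) + 1 := by
      by_contra hc
      rw [e1, if_neg hc] at e2
      omega
    have e3 := cnt_split_j σ i' j cJ rfl (by omega)
    rw [if_pos ⟨hcond.1, by omega⟩] at e3
    rw [Rfun_eq_cnt σ hσ hi'1 (by omega) hj, Rfun_eq_cnt σ hσ hi'1 (by omega) (by omega)]
    exact e3
  · intro h j' hj'1 hj'n
    have e1 : cnt σ i j = cnt σ (i + 1) j + 1 := by
      rw [← Rfun_eq_cnt σ hσ hi hij.le hj, ← Rfun_eq_cnt σ hσ (by omega) (by omega) hj]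
      exact h
    have e2 := cnt_split_i σ hσ i j dI rfl hi
    have hcond : i - 1 < (σ dI : ℕ) ∧ (σ dI : ℕ) + 1 ≤ j := by
      by_contra hc
      rw [e1, if_neg hc] at e2
      omega
    have e3 := cnt_split_i σ hσ i j' dI rfl hi
    rw [if_pos ⟨hcond.1, by omega⟩] at e3
    rw [Rfun_eq_cnt σ hσ hi (by omega) hj'n, Rfun_eq_cnt σ hσ (by omega) (by omega) hj'n]
    exact e3
end

section
/- For involutions σ and σ' of {1,…,n}, let M be the entrywise minimum of R_σ and R_{σ'}. Then the following are equivalent: (1) the set {τ : τ an involution with R_τ ⪯ M} has a maximum element with respect to ⪯, i.e. there is an involution δ with R_δ ⪯ M such that every involution τ with R_τ ⪯ M satisfies R_τ ⪯ R_δ; (2) there exists an involution η with R_η = M. -/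
open Matrix

/-! ### Auxiliary machinery for stmt16 -/

/-- The number of arcs `a < σ a` of `σ` lying (1-based) inside the window `[i, j]`. -/
def AC {n : ℕ} (σ : Equiv.Perm (Fin n)) (i j : ℕ) : ℕ :=
  (Finset.univ.filter fun x : Fin n =>
    x < σ x ∧ i ≤ x.1 + 1 ∧ (σ x).1 + 1 ≤ j).card

/-- The rank of a partial-permutation 0/1 matrix is the number of nonzero rows. -/
lemma rank_partial_perm_s16 {N : ℕ} (M : Matrix (Fin N) (Fin N) ℂ)
    (φ : Fin N → Option (Fin N))
    (hM : ∀ a b, M a b = if φ a = some b then 1 else 0)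
    (hinj : ∀ a a' b, φ a = some b → φ a' = some b → a = a') :
    M.rank = (Finset.univ.filter fun a => (φ a).isSome = true).card := by
  classical
  set w : Fin N → ℂ := fun a => if (φ a).isSome = true then 1 else 0 with hw
  have hDM : Matrix.diagonal w * M = M := by
    ext a b
    rw [Matrix.diagonal_mul]
    rcases h : φ a with _ | c
    · have : M a b = 0 := by rw [hM a b, h]; simp
      rw [this, mul_zero]
    · have : w a = 1 := by simp [hw, h]
      rw [this, one_mul]
  have hMMt : M * Mᵀ = Matrix.diagonal w := by
    ext a a'
    rw [Matrix.mul_apply]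
    rcases h : φ a with _ | c
    · have hz : ∀ b, M a b * Mᵀ b a' = 0 := by
        intro b; rw [Matrix.transpose_apply, hM a b, h]; simp
      rw [Finset.sum_congr rfl fun b _ => hz b, Finset.sum_const_zero]
      rw [Matrix.diagonal_apply]
      split_ifs with hd
      · subst hd; simp [hw, h]
      · rfl
    · have hterm : ∀ b, M a b * Mᵀ b a' = if c = b then M a' b else 0 := by
        intro b
        rw [Matrix.transpose_apply, hM a b, h]
        by_cases hb : c = b
        · subst hb; simp
        · have : ¬ (some c = some b) := by simpa using hb
          rw [if_neg this, if_neg hb, zero_mul]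
      rw [Finset.sum_congr rfl fun b _ => hterm b, Finset.sum_ite_eq]
      simp only [Finset.mem_univ, if_true]
      rw [Matrix.diagonal_apply]
      by_cases hd : a = a'
      · subst hd
        rw [if_pos rfl, hM a c, if_pos (by rw [h])]
        simp [hw, h]
      · rw [if_neg hd, hM a' c]
        rw [if_neg]
        intro hc
        exact hd (hinj a a' c (by rw [h]) hc)
  have h1 : M.rank ≤ (Matrix.diagonal w).rank := by
    calc M.rank = (Matrix.diagonal w * M).rank := by rw [hDM]
    _ ≤ (Matrix.diagonal w).rank := Matrix.rank_mul_le_left _ _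
  have h2 : (Matrix.diagonal w).rank ≤ M.rank := by
    calc (Matrix.diagonal w).rank = (M * Mᵀ).rank := by rw [hMMt]
    _ ≤ M.rank := Matrix.rank_mul_le_left _ _
  have hr : M.rank = (Matrix.diagonal w).rank := le_antisymm h1 h2
  rw [hr, Matrix.rank_diagonal, Fintype.card_subtype]
  congr 1
  apply Finset.filter_congr
  intro x _
  by_cases hx : (φ x).isSome = true <;> simp [hw, hx]

/-- The embedding of window indices into `Fin n`. -/
def emb {n : ℕ} (i j : ℕ) (h1 : 1 ≤ i) (h3 : j ≤ n) (a : Fin (j + 1 - i)) : Fin n :=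
  ⟨i - 1 + a.1, by have := a.2; omega⟩

/-- The partial permutation underlying the window submatrix of `Nmat σ`. -/
def phi {n : ℕ} (σ : Equiv.Perm (Fin n)) (i j : ℕ) (h1 : 1 ≤ i) (h2 : i < j) (h3 : j ≤ n)
    (a : Fin (j + 1 - i)) : Option (Fin (j + 1 - i)) :=
  if h : emb i j h1 h3 a < σ (emb i j h1 h3 a) ∧ (σ (emb i j h1 h3 a)).1 + 1 ≤ j
  then some ⟨(σ (emb i j h1 h3 a)).1 + 1 - i, by have := h.2; omega⟩
  else none

lemma Rfun_eq_AC {n : ℕ} (σ : Equiv.Perm (Fin n)) (i j : ℕ)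
    (h1 : 1 ≤ i) (h2 : i < j) (h3 : j ≤ n) :
    Rfun σ i j = AC σ i j := by
  have hcond : 1 ≤ i ∧ i < j ∧ j ≤ n := ⟨h1, h2, h3⟩
  have hM : ∀ a b, blk (Nmat σ) i j hcond.1 hcond.2.1.le hcond.2.2 a b =
      if phi σ i j h1 h2 h3 a = some b then 1 else 0 := by
    intro a b
    show Nmat σ (emb i j h1 h3 a) (emb i j h1 h3 b) = _
    set x := emb i j h1 h3 a with hxdef
    set y := emb i j h1 h3 b with hydef
    have hxv : x.1 = i - 1 + a.1 := rfl
    have hyv : y.1 = i - 1 + b.1 := rfl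
    rw [Nmat, Matrix.of_apply, phi]
    by_cases h : x < σ x ∧ (σ x).1 + 1 ≤ j
    · rw [dif_pos h]
      have hlt : x.1 < (σ x).1 := h.1
      by_cases he : σ x = y
      · rw [if_pos ⟨by rw [← he]; exact h.1, he⟩, if_pos]
        congr 1
        apply Fin.ext
        show (σ x).1 + 1 - i = b.1
        have : (σ x).1 = i - 1 + b.1 := by rw [he, hyv]
        have hb2 := b.2
        omega
      · rw [if_neg, if_neg]
        · intro hc
          apply he
          have hcv : (σ x).1 + 1 - i = b.1 := congrArg Fin.val (Option.some.inj hc)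
          apply Fin.ext
          rw [hyv]
          have hx2 := a.2
          omega
        · rintro ⟨-, hcontra⟩; exact he hcontra
    · rw [dif_neg h, if_neg, if_neg]
      · simp
      · rintro ⟨hlt, he⟩
        apply h
        constructor
        · rw [he]; exact hlt
        · have : (σ x).1 = i - 1 + b.1 := by rw [he, hyv]
          have hb2 := b.2
          omega
  have hinj : ∀ a a' b, phi σ i j h1 h2 h3 a = some b → phi σ i j h1 h2 h3 a' = some b →
      a = a' := by
    intro a a' b ha ha'
    rw [phi] at ha ha'
    split_ifs at ha with h
    split_ifs at ha' with h'
    have hv : (σ (emb i j h1 h3 a)).1 + 1 - i = b.1 := congrArg Fin.val (Option.some.inj ha)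
    have hv' : (σ (emb i j h1 h3 a')).1 + 1 - i = b.1 := congrArg Fin.val (Option.some.inj ha')
    have hlt : (emb i j h1 h3 a).1 < (σ (emb i j h1 h3 a)).1 := h.1
    have hlt' : (emb i j h1 h3 a').1 < (σ (emb i j h1 h3 a')).1 := h'.1
    have hev : (emb i j h1 h3 a).1 = i - 1 + a.1 := rfl
    have hev' : (emb i j h1 h3 a').1 = i - 1 + a'.1 := rfl
    have hσeq : σ (emb i j h1 h3 a) = σ (emb i j h1 h3 a') := by
      apply Fin.ext; omega
    have := σ.injective hσeq
    have hvv : i - 1 + a.1 = i - 1 + a'.1 := by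
      rw [← hev, ← hev', this]
    exact Fin.ext (by omega)
  simp only [Rfun]
  rw [dif_pos hcond, rank_partial_perm_s16 _ (phi σ i j h1 h2 h3) hM hinj]
  apply Finset.card_bij (fun a _ => emb i j h1 h3 a)
  · intro a ha
    simp only [Finset.mem_filter, Finset.mem_univ, true_and] at ha ⊢
    rw [phi] at ha
    split_ifs at ha with h
    · exact ⟨h.1, by have : (emb i j h1 h3 a).1 = i - 1 + a.1 := rfl; omega, h.2⟩
    · simp at ha
  · intro a ha a' ha' heq
    have : i - 1 + a.1 = i - 1 + a'.1 := congrArg Fin.val heq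
    exact Fin.ext (by omega)
  · intro x hx
    simp only [Finset.mem_filter, Finset.mem_univ, true_and] at hx
    obtain ⟨hlt, hxi, hxj⟩ := hx
    have hltv : x.1 < (σ x).1 := hlt
    have ha : x.1 + 1 - i < j + 1 - i := by omega
    refine ⟨⟨x.1 + 1 - i, ha⟩, ?_, ?_⟩
    · have hembx : emb i j h1 h3 ⟨x.1 + 1 - i, ha⟩ = x := by
        apply Fin.ext
        show i - 1 + (x.1 + 1 - i) = x.1
        omega
      simp only [Finset.mem_filter, Finset.mem_univ, true_and]
      rw [phi, dif_pos]
      · rfl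
      · rw [hembx]; exact ⟨hlt, hxj⟩
    · apply Fin.ext
      show i - 1 + (x.1 + 1 - i) = x.1
      omega

lemma Rfun_out {n : ℕ} (σ : Equiv.Perm (Fin n)) (i j : ℕ)
    (h : ¬ (1 ≤ i ∧ i < j ∧ j ≤ n)) : Rfun σ i j = 0 := by
  simp only [Rfun]
  rw [dif_neg h]

lemma AC_mono {n : ℕ} (σ : Equiv.Perm (Fin n)) {i j i' j' : ℕ}
    (h : i' ≤ i) (h' : j ≤ j') : AC σ i j ≤ AC σ i' j' := by
  apply Finset.card_le_card
  intro x hx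
  simp only [Finset.mem_filter, Finset.mem_univ, true_and] at hx ⊢
  exact ⟨hx.1, by omega, by omega⟩

/-- Removing `p - i` columns on the left and `j - q` on the right kills at most
that many arcs. -/
lemma AC_window {n : ℕ} (σ : Equiv.Perm (Fin n)) (i j p q : ℕ)
    (h1 : 1 ≤ i) (hip : i ≤ p) (hpq : p ≤ q) (hqj : q ≤ j) :
    AC σ i j ≤ AC σ p q + (p - i) + (j - q) := by
  classical
  set A := Finset.univ.filter (fun x : Fin n =>
    x < σ x ∧ i ≤ x.1 + 1 ∧ (σ x).1 + 1 ≤ j) with hA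
  set B := Finset.univ.filter (fun x : Fin n =>
    x < σ x ∧ p ≤ x.1 + 1 ∧ (σ x).1 + 1 ≤ q) with hB
  set X1 := Finset.univ.filter (fun x : Fin n => i ≤ x.1 + 1 ∧ x.1 + 1 < p) with hX1
  set X2 := Finset.univ.filter (fun x : Fin n =>
    x < σ x ∧ q < (σ x).1 + 1 ∧ (σ x).1 + 1 ≤ j) with hX2
  have hsub : A ⊆ B ∪ X1 ∪ X2 := by
    intro x hx
    simp only [hA, hB, hX1, hX2, Finset.mem_filter, Finset.mem_univ, true_and,
      Finset.mem_union] at hx ⊢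
    obtain ⟨hlt, hi', hj'⟩ := hx
    by_cases hp' : x.1 + 1 < p
    · exact Or.inl (Or.inr ⟨hi', hp'⟩)
    · by_cases hq' : q < (σ x).1 + 1
      · exact Or.inr ⟨hlt, hq', hj'⟩
      · exact Or.inl (Or.inl ⟨hlt, by omega, by omega⟩)
  have hcard : A.card ≤ B.card + X1.card + X2.card := by
    calc A.card ≤ (B ∪ X1 ∪ X2).card := Finset.card_le_card hsub
    _ ≤ (B ∪ X1).card + X2.card := Finset.card_union_le _ _
    _ ≤ B.card + X1.card + X2.card := by
        have := Finset.card_union_le B X1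
        omega
  have hX1card : X1.card ≤ p - i := by
    have : X1.card ≤ (Finset.Ico (i - 1) (p - 1)).card := by
      apply Finset.card_le_card_of_injOn (fun x => x.1)
      · intro x hx
        simp only [hX1, Finset.mem_coe, Finset.mem_filter, Finset.mem_univ, true_and] at hx
        simp only [Finset.mem_coe, Finset.mem_Ico]
        omega
      · intro x _ x' _ hxx
        exact Fin.ext hxx
    rw [Nat.card_Ico] at this
    omega
  have hX2card : X2.card ≤ j - q := by
    have : X2.card ≤ (Finset.Ico q j).card := by
      apply Finset.card_le_card_of_injOn (fun x => (σ x).1)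
      · intro x hx
        simp only [hX2, Finset.mem_coe, Finset.mem_filter, Finset.mem_univ, true_and] at hx
        simp only [Finset.mem_coe, Finset.mem_Ico]
        omega
      · intro x _ x' _ hxx
        exact σ.injective (Fin.ext hxx)
    rw [Nat.card_Ico] at this
    omega
  show A.card ≤ B.card + (p - i) + (j - q)
  omega

/-- An involution has at most `(j + 1 - i) / 2` arcs in the window `[i, j]`. -/
lemma AC_double {n : ℕ} (σ : Equiv.Perm (Fin n)) (hσ : IsInvol σ) (i j : ℕ)
    (h1 : 1 ≤ i) : 2 * AC σ i j ≤ j + 1 - i := by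
  classical
  have hinv : ∀ x, σ (σ x) = x := by
    intro x
    have h := congrArg (fun e : Equiv.Perm (Fin n) => e x) hσ
    simpa [Equiv.Perm.mul_apply] using h
  set S := Finset.univ.filter (fun x : Fin n =>
    x < σ x ∧ i ≤ x.1 + 1 ∧ (σ x).1 + 1 ≤ j) with hS
  set T := S.image σ with hT
  have hdisj : Disjoint S T := by
    rw [Finset.disjoint_left]
    intro z hzS hzT
    obtain ⟨x, hxS, hxz⟩ := Finset.mem_image.mp hzT
    simp only [hS, Finset.mem_filter, Finset.mem_univ, true_and] at hzS hxS
    have h1' : x < σ x := hxS.1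
    have h2' : z < σ z := hzS.1
    have h3' : σ z = x := by rw [← hxz, hinv]
    have hv1 : x.1 < z.1 := by rw [← hxz]; exact h1'
    have hv2 : z.1 < x.1 := by
      have := h2'
      rw [h3'] at this
      exact this
    omega
  have hcardT : T.card = S.card := Finset.card_image_of_injective S σ.injective
  set W := Finset.univ.filter (fun z : Fin n => i ≤ z.1 + 1 ∧ z.1 + 1 ≤ j) with hW
  have hsub : S ∪ T ⊆ W := by
    intro z hz
    rcases Finset.mem_union.mp hz with hz | hz
    · simp only [hS, Finset.mem_filter, Finset.mem_univ, true_and] at hz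
      simp only [hW, Finset.mem_filter, Finset.mem_univ, true_and]
      have : z.1 < (σ z).1 := hz.1
      omega
    · obtain ⟨x, hxS, hxz⟩ := Finset.mem_image.mp hz
      simp only [hS, Finset.mem_filter, Finset.mem_univ, true_and] at hxS
      simp only [hW, Finset.mem_filter, Finset.mem_univ, true_and]
      have : x.1 < (σ x).1 := hxS.1
      rw [← hxz]
      omega
  have hWcard : W.card ≤ j + 1 - i := by
    have : W.card ≤ (Finset.Ico (i - 1) j).card := by
      apply Finset.card_le_card_of_injOn (fun x => x.1)
      · intro x hx
        simp only [hW, Finset.mem_coe, Finset.mem_filter, Finset.mem_univ, true_and] at hx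
        simp only [Finset.mem_coe, Finset.mem_Ico]
        omega
      · intro x _ x' _ hxx
        exact Fin.ext hxx
    rw [Nat.card_Ico] at this
    omega
  have : S.card + T.card = (S ∪ T).card := (Finset.card_union_of_disjoint hdisj).symm
  have hle := Finset.card_le_card hsub
  show 2 * S.card ≤ j + 1 - i
  omega

/-- The underlying function of the "maximally spread crossing matching" with `m` arcs
in the window `[i, j]`. -/
def crossF {n : ℕ} (i j m : ℕ) (hi : 1 ≤ i) (hm : i + 2 * m ≤ j + 1) (hj : j ≤ n)
    (x : Fin n) : Fin n :=
  if h : i - 1 ≤ x.1 ∧ x.1 < i - 1 + m then ⟨x.1 + (j + 1 - i - m), by have := x.2; omega⟩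
  else if h' : j - m ≤ x.1 ∧ x.1 < j then ⟨x.1 - (j + 1 - i - m), by have := x.2; omega⟩
  else x

lemma crossF_val {n : ℕ} (i j m : ℕ) (hi : 1 ≤ i) (hm : i + 2 * m ≤ j + 1) (hj : j ≤ n)
    (x : Fin n) : (crossF i j m hi hm hj x).1 =
      if i - 1 ≤ x.1 ∧ x.1 < i - 1 + m then x.1 + (j + 1 - i - m)
      else if j - m ≤ x.1 ∧ x.1 < j then x.1 - (j + 1 - i - m)
      else x.1 := by
  rw [crossF]
  split_ifs with h h' <;> rfl

lemma crossF_invol {n : ℕ} (i j m : ℕ) (hi : 1 ≤ i) (hm : i + 2 * m ≤ j + 1) (hj : j ≤ n) :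
    Function.Involutive (crossF i j m hi hm hj) := by
  intro x
  apply Fin.ext
  rw [crossF_val, crossF_val]
  split_ifs <;> omega

/-- The "maximally spread crossing matching" as a permutation. -/
def crossPerm {n : ℕ} (i j m : ℕ) (hi : 1 ≤ i) (hm : i + 2 * m ≤ j + 1) (hj : j ≤ n) :
    Equiv.Perm (Fin n) :=
  Function.Involutive.toPerm _ (crossF_invol i j m hi hm hj)

lemma crossPerm_val {n : ℕ} (i j m : ℕ) (hi : 1 ≤ i) (hm : i + 2 * m ≤ j + 1) (hj : j ≤ n)
    (x : Fin n) : (crossPerm i j m hi hm hj x).1 =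
      if i - 1 ≤ x.1 ∧ x.1 < i - 1 + m then x.1 + (j + 1 - i - m)
      else if j - m ≤ x.1 ∧ x.1 < j then x.1 - (j + 1 - i - m)
      else x.1 := by
  have : crossPerm i j m hi hm hj x = crossF i j m hi hm hj x := rfl
  rw [this, crossF_val]

lemma crossPerm_invol {n : ℕ} (i j m : ℕ) (hi : 1 ≤ i) (hm : i + 2 * m ≤ j + 1)
    (hj : j ≤ n) : IsInvol (crossPerm i j m hi hm hj) := by
  apply Equiv.ext
  intro x
  rw [Equiv.Perm.mul_apply]
  show crossF i j m hi hm hj (crossF i j m hi hm hj x) = _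
  rw [crossF_invol i j m hi hm hj x]
  rfl

/-- If `x` is moved up by `crossPerm` then `x` is in the left block. -/
lemma crossPerm_lt {n : ℕ} (i j m : ℕ) (hi : 1 ≤ i) (hm : i + 2 * m ≤ j + 1) (hj : j ≤ n)
    (x : Fin n) (hx : x < crossPerm i j m hi hm hj x) :
    i - 1 ≤ x.1 ∧ x.1 < i - 1 + m := by
  have hv : x.1 < (crossPerm i j m hi hm hj x).1 := hx
  rw [crossPerm_val] at hv
  by_cases hL : i - 1 ≤ x.1 ∧ x.1 < i - 1 + m
  · exact hL
  · rw [if_neg hL] at hv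
    by_cases hR : j - m ≤ x.1 ∧ x.1 < j
    · rw [if_pos hR] at hv; omega
    · rw [if_neg hR] at hv; omega

lemma AC_cross_lower {n : ℕ} (i j m : ℕ) (hi : 1 ≤ i) (hm : i + 2 * m ≤ j + 1)
    (hj : j ≤ n) : m ≤ AC (crossPerm i j m hi hm hj) i j := by
  rcases Nat.eq_zero_or_pos m with hm0 | hmpos
  · omega
  have hkey : (Finset.range m).card ≤ _ :=
    Finset.card_le_card_of_injOn
      (fun t => (⟨i - 1 + min t (m - 1), by omega⟩ : Fin n))
      (t := Finset.univ.filter fun x : Fin n =>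
        x < crossPerm i j m hi hm hj x ∧ i ≤ x.1 + 1 ∧
          (crossPerm i j m hi hm hj x).1 + 1 ≤ j)
      (by
        intro t ht
        simp only [Finset.mem_coe, Finset.mem_range] at ht ⊢
        have hmin : min t (m - 1) = t := by omega
        simp only [Finset.mem_filter, Finset.mem_univ, true_and]
        set x : Fin n := ⟨i - 1 + min t (m - 1), by omega⟩ with hxdef
        have hxv : x.1 = i - 1 + t := by rw [hxdef]; simp [hmin]
        have hbv : (crossPerm i j m hi hm hj x).1 = x.1 + (j + 1 - i - m) := by
          rw [crossPerm_val, if_pos (by omega)]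
        refine ⟨?_, by omega, by omega⟩
        show x.1 < (crossPerm i j m hi hm hj x).1
        omega)
      (by
        intro t ht t' ht' heq
        simp only [Finset.coe_range, Set.mem_Iio] at ht ht'
        have := congrArg Fin.val heq
        simp only at this
        omega)
  rwa [Finset.card_range] at hkey

/-- The crossing matching's arc count in any window is dominated by that of any
involution having at least `m` arcs in `[i, j]`. -/
lemma AC_cross_le {n : ℕ} (σ'' : Equiv.Perm (Fin n)) (i j m p q : ℕ)
    (hi : 1 ≤ i) (hm : i + 2 * m ≤ j + 1) (hj : j ≤ n)
    (hms : m ≤ AC σ'' i j) :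
    AC (crossPerm i j m hi hm hj) p q ≤ AC σ'' p q := by
  classical
  set τ := crossPerm i j m hi hm hj with hτ
  by_cases hz : AC τ p q = 0
  · omega
  have hpos : 0 < AC τ p q := Nat.pos_of_ne_zero hz
  obtain ⟨x₀, hx₀⟩ := Finset.card_pos.mp hpos
  simp only [Finset.mem_filter, Finset.mem_univ, true_and] at hx₀
  obtain ⟨hx₀lt, hx₀p, hx₀q⟩ := hx₀
  have hx₀L := crossPerm_lt i j m hi hm hj x₀ hx₀lt
  have hx₀v : (τ x₀).1 = x₀.1 + (j + 1 - i - m) := by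
    rw [hτ, crossPerm_val, if_pos hx₀L]
  set p' := max p i with hp'
  set q' := min q j with hq'
  have hmpos : 1 ≤ m := by omega
  have hp'q' : p' ≤ q' := by omega
  -- upper bound for the crossing matching
  have hcross : AC τ p q ≤ (m - (j - q')) - (p' - i) := by
    have : AC τ p q ≤ (Finset.Ico (p' - i) (m - (j - q'))).card := by
      apply Finset.card_le_card_of_injOn (fun x => x.1 + 1 - i)
      · intro x hx
        simp only [Finset.mem_coe, Finset.mem_filter, Finset.mem_univ, true_and] at hx
        obtain ⟨hxlt, hxp, hxq⟩ := hx
        have hxL := crossPerm_lt i j m hi hm hj x hxlt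
        have hxv : (τ x).1 = x.1 + (j + 1 - i - m) := by
          rw [hτ, crossPerm_val, if_pos hxL]
        simp only [Finset.mem_coe, Finset.mem_Ico]
        omega
      · intro x hx x' hx' heq
        simp only [Finset.mem_coe, Finset.mem_filter, Finset.mem_univ, true_and] at hx hx'
        have hxL := crossPerm_lt i j m hi hm hj x hx.1
        have hx'L := crossPerm_lt i j m hi hm hj x' hx'.1
        have heq' : x.1 + 1 - i = x'.1 + 1 - i := heq
        apply Fin.ext
        omega
    rw [Nat.card_Ico] at this
    omega
  have hwin : AC σ'' i j ≤ AC σ'' p' q' + (p' - i) + (j - q') :=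
    AC_window σ'' i j p' q' hi (le_max_right p i) hp'q' (min_le_right q j)
  have hmono : AC σ'' p' q' ≤ AC σ'' p q :=
    AC_mono σ'' (le_max_left p i) (min_le_left q j)
  omega

/-- the involutions `τ` with `R_τ ⪯ min(R_σ, R_{σ'})` have a maximum
element iff the minimum is itself a rank matrix of an involution. -/
theorem stmt16 (n : ℕ) (hn : 1 ≤ n) (σ σ' : Equiv.Perm (Fin n))
    (hσ : IsInvol σ) (hσ' : IsInvol σ') :
    (∃ δ : Equiv.Perm (Fin n), IsInvol δ ∧
      (∀ i j, Rfun δ i j ≤ min (Rfun σ i j) (Rfun σ' i j)) ∧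
      ∀ τ : Equiv.Perm (Fin n), IsInvol τ →
        (∀ i j, Rfun τ i j ≤ min (Rfun σ i j) (Rfun σ' i j)) →
        ∀ i j, Rfun τ i j ≤ Rfun δ i j) ↔
    (∃ η : Equiv.Perm (Fin n), IsInvol η ∧
      ∀ i j, Rfun η i j = min (Rfun σ i j) (Rfun σ' i j)) := by
  constructor
  · rintro ⟨δ, hδinv, hδle, hδmax⟩
    refine ⟨δ, hδinv, fun i j => ?_⟩
    by_cases hr : 1 ≤ i ∧ i < j ∧ j ≤ n
    · obtain ⟨hi, hij, hjn⟩ := hr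
      have hRσ : Rfun σ i j = AC σ i j := Rfun_eq_AC σ i j hi hij hjn
      have hRσ' : Rfun σ' i j = AC σ' i j := Rfun_eq_AC σ' i j hi hij hjn
      refine le_antisymm (hδle i j) ?_
      set m := min (AC σ i j) (AC σ' i j) with hmdef
      have h2m : i + 2 * m ≤ j + 1 := by
        have hd := AC_double σ hσ i j hi
        omega
      set τ := crossPerm i j m hi h2m hjn with hτdef
      have hτinv : IsInvol τ := crossPerm_invol i j m hi h2m hjn
      have hτle : ∀ p q, Rfun τ p q ≤ min (Rfun σ p q) (Rfun σ' p q) := by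
        intro p q
        by_cases hr' : 1 ≤ p ∧ p < q ∧ q ≤ n
        · obtain ⟨hp, hpq, hqn⟩ := hr'
          rw [Rfun_eq_AC τ p q hp hpq hqn, Rfun_eq_AC σ p q hp hpq hqn,
            Rfun_eq_AC σ' p q hp hpq hqn]
          exact le_min
            (AC_cross_le σ i j m p q hi h2m hjn (min_le_left _ _))
            (AC_cross_le σ' i j m p q hi h2m hjn (min_le_right _ _))
        · rw [Rfun_out τ p q hr']
          exact Nat.zero_le _
      have hmax := hδmax τ hτinv hτle i j
      rw [Rfun_eq_AC τ i j hi hij hjn] at hmax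
      have hlow : m ≤ AC τ i j := AC_cross_lower i j m hi h2m hjn
      rw [hRσ, hRσ']
      omega
    · rw [Rfun_out δ i j hr, Rfun_out σ i j hr, Rfun_out σ' i j hr]
      simp
  · rintro ⟨η, hη, hηeq⟩
    refine ⟨η, hη, fun i j => (hηeq i j).le, fun τ _ hτ i j => ?_⟩
    exact (hτ i j).trans (hηeq i j).ge
end

section
/- Let n = 6, σ = (2,3)(5,6) and σ' = (1,2)(4,5) (the involutions attached to the two standard Young tableaux of shape (2,2,1,1) with columns ({1,2,4,5},{3,6}) and ({1,3,4,6},{2,5})), and let M be the entrywise minimum of R_σ and R_{σ'}. Then no involution τ of {1,…,6} satisfies R_τ = M, and the maximal elements, with respect to ⪯, of the set of involutions τ with R_τ ⪯ M are exactly the two involutions (1,3)(4,6) and (1,6)(2,5). Moreover the dimension over ℂ of the space of upper-triangular 6×6 matrices commuting with N_{(1,3)(4,6)} is 15, while for N_{(1,6)(2,5)} it is 17 (so the corresponding B-orbits have dimensions 6 and 4, giving an intersection of two orbital varieties whose components have different dimensions). -/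
open Matrix

section Aux

open Matrix

@[simp] lemma cons_val_five' {α : Type*} {m : ℕ} (x : α) (u : Fin (m + 5) → α) :
    vecCons x u 5 = vecHead (vecTail (vecTail (vecTail (vecTail u)))) := rfl

/-- Rank of a sum of distinct standard basis matrices. -/
lemma rank_sum_std {m : ℕ} {ι : Type} [Fintype ι] [DecidableEq ι]
    (r c : ι → Fin m) (hr : Function.Injective r) (hc : Function.Injective c) :
    (∑ t, Matrix.single (r t) (c t) (1:ℂ)).rank = Fintype.card ι := by
  set N : Matrix (Fin m) (Fin m) ℂ := ∑ t, Matrix.single (r t) (c t) (1:ℂ) with hN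
  set A : Matrix (Fin m) ι ℂ := Matrix.of fun x t => if r t = x then 1 else 0 with hA
  set B : Matrix ι (Fin m) ℂ := Matrix.of fun t y => if c t = y then 1 else 0 with hB
  have hAB : A * B = N := by
    ext x y
    simp only [hN, hA, hB, Matrix.mul_apply, Matrix.sum_apply, Matrix.of_apply,
      Matrix.single, ite_mul, one_mul, zero_mul]
    congr 1; ext t
    by_cases h1 : r t = x <;> by_cases h2 : c t = y <;> simp [h1, h2]
  have hATA : Aᵀ * A = (1 : Matrix ι ι ℂ) := by
    ext s t
    simp only [Matrix.mul_apply, Matrix.transpose_apply, hA, Matrix.of_apply]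
    rcases eq_or_ne s t with h | h
    · subst h
      rw [Finset.sum_eq_single_of_mem (r s) (Finset.mem_univ _)
          (fun b _ hb => by rw [if_neg (fun h => hb h.symm), zero_mul]), if_pos rfl, one_mul,
        Matrix.one_apply_eq]
    · rw [Matrix.one_apply_ne h, Finset.sum_eq_zero]
      intro x _
      by_cases h2 : r t = x
      · rw [if_neg (fun h1 : r s = x => h (hr (h1.trans h2.symm))), zero_mul]
      · rw [if_neg h2, mul_zero]
  have hBBT : B * Bᵀ = (1 : Matrix ι ι ℂ) := by
    ext s t
    simp only [Matrix.mul_apply, Matrix.transpose_apply, hB, Matrix.of_apply]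
    rcases eq_or_ne s t with h | h
    · subst h
      rw [Finset.sum_eq_single_of_mem (c s) (Finset.mem_univ _)
          (fun b _ hb => by rw [if_neg (fun h => hb h.symm), zero_mul]), if_pos rfl, one_mul,
        Matrix.one_apply_eq]
    · rw [Matrix.one_apply_ne h, Finset.sum_eq_zero]
      intro x _
      by_cases h2 : c t = x
      · rw [if_neg (fun h1 : c s = x => h (hc (h1.trans h2.symm))), zero_mul]
      · rw [if_neg h2, mul_zero]
  have key : Aᵀ * N * Bᵀ = 1 := by
    rw [← hAB]
    simp only [Matrix.mul_assoc]
    rw [hBBT, Matrix.mul_one]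
    exact hATA
  refine le_antisymm ?_ ?_
  · calc N.rank = (A * B).rank := by rw [hAB]
    _ ≤ A.rank := rank_mul_le_left A B
    _ ≤ Fintype.card ι := rank_le_card_width A
  · calc (Fintype.card ι : ℕ) = (1 : Matrix ι ι ℂ).rank := rank_one.symm
    _ = (Aᵀ * (N * Bᵀ)).rank := by rw [← Matrix.mul_assoc, key]
    _ ≤ (N * Bᵀ).rank := rank_mul_le_right _ _
    _ ≤ N.rank := rank_mul_le_left _ _

/-- Computable counting version of the rank matrix. -/
def Rcount (σ : Equiv.Perm (Fin 6)) (i j : ℕ) : ℕ :=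
  if 1 ≤ i ∧ i < j ∧ j ≤ 6 then
    (Finset.univ.filter fun a : Fin 6 => a.1 < (σ a).1 ∧ i - 1 ≤ a.1 ∧ (σ a).1 < j).card
  else 0

lemma Rcount_zero (σ : Equiv.Perm (Fin 6)) (i j : ℕ) (h : ¬ (1 ≤ i ∧ i < j ∧ j ≤ 6)) :
    Rcount σ i j = 0 := if_neg h

lemma Rfun_eq_Rcount (σ : Equiv.Perm (Fin 6)) (i j : ℕ) : Rfun σ i j = Rcount σ i j := by
  unfold Rfun Rcount
  by_cases h : 1 ≤ i ∧ i < j ∧ j ≤ 6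
  · rw [dif_pos h, if_pos h]
    obtain ⟨h1, h2, h3⟩ := h
    set S := Finset.univ.filter (fun a : Fin 6 => a.1 < (σ a).1 ∧ i - 1 ≤ a.1 ∧ (σ a).1 < j)
      with hS
    have memS : ∀ a : Fin 6, a ∈ S ↔ (a.1 < (σ a).1 ∧ i - 1 ≤ a.1 ∧ (σ a).1 < j) := by
      intro a; simp [hS]
    have hb : ∀ a : {x // x ∈ S}, (a.1.1 - (i-1) < j + 1 - i) := by
      intro a; have := (memS a.1).mp a.2; omega
    have hbc : ∀ a : {x // x ∈ S}, ((σ a.1).1 - (i-1) < j + 1 - i) := by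
      intro a; have := (memS a.1).mp a.2; omega
    set r : {x // x ∈ S} → Fin (j+1-i) := fun a => ⟨a.1.1 - (i-1), hb a⟩ with hrdef
    set c : {x // x ∈ S} → Fin (j+1-i) := fun a => ⟨(σ a.1).1 - (i-1), hbc a⟩ with hcdef
    have hr : Function.Injective r := by
      intro a b hab
      have ha := (memS a.1).mp a.2; have hb' := (memS b.1).mp b.2
      have hv : (a.1.1 : ℕ) = b.1.1 := by
        have := congrArg Fin.val hab
        simp only [hrdef] at this
        omega
      exact Subtype.ext (Fin.ext hv)
    have hc : Function.Injective c := by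
      intro a b hab
      have ha := (memS a.1).mp a.2; have hb' := (memS b.1).mp b.2
      have hv : ((σ a.1).1 : ℕ) = (σ b.1).1 := by
        have := congrArg Fin.val hab
        simp only [hcdef] at this
        omega
      exact Subtype.ext (σ.injective (Fin.ext hv))
    have hmat : blk (Nmat σ) i j h1 h2.le h3 = ∑ t, Matrix.single (r t) (c t) (1:ℂ) := by
      ext x y
      rcases x with ⟨xv, hxv⟩
      rcases y with ⟨yv, hyv⟩
      have hx6 : i - 1 + xv < 6 := by omega
      have hy6 : i - 1 + yv < 6 := by omega
      rw [Matrix.sum_apply]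
      show (if (⟨i-1+xv,hx6⟩ : Fin 6) < ⟨i-1+yv,hy6⟩ ∧ σ ⟨i-1+xv,hx6⟩ = ⟨i-1+yv,hy6⟩
          then (1:ℂ) else 0) = _
      by_cases hP : (σ ⟨i-1+xv,hx6⟩).1 = i - 1 + yv ∧ i - 1 + xv < i - 1 + yv
      · obtain ⟨hσ, hlt⟩ := hP
        rw [if_pos ⟨Fin.mk_lt_mk.mpr hlt, Fin.ext hσ⟩]
        have hmem : (⟨i-1+xv,hx6⟩ : Fin 6) ∈ S := by
          rw [memS]
          refine ⟨?_, ?_, ?_⟩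
          · rw [hσ]; exact hlt
          · exact Nat.le_add_right _ _
          · rw [hσ]; omega
        rw [Finset.sum_eq_single_of_mem (⟨⟨i-1+xv,hx6⟩, hmem⟩ : {a // a ∈ S})
            (Finset.mem_univ _) ?side]
        case side =>
          intro t _ hne
          show (if (r t = ⟨xv,hxv⟩ ∧ c t = ⟨yv,hyv⟩) then (1:ℂ) else 0) = 0
          rw [if_neg]
          rintro ⟨e1, e2⟩
          apply hne
          have ht := (memS t.1).mp t.2
          have hv : t.1.1 - (i-1) = xv := congrArg Fin.val e1
          exact Subtype.ext (Fin.ext (show t.1.1 = i - 1 + xv by omega))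
        symm
        show (if (r ⟨⟨i-1+xv,hx6⟩, hmem⟩ = ⟨xv,hxv⟩ ∧ c ⟨⟨i-1+xv,hx6⟩, hmem⟩ = ⟨yv,hyv⟩)
            then (1:ℂ) else 0) = 1
        rw [if_pos]
        refine ⟨Fin.ext ?_, Fin.ext ?_⟩
        · show i - 1 + xv - (i-1) = xv
          omega
        · show (σ ⟨i-1+xv,hx6⟩).1 - (i-1) = yv
          omega
      · rw [if_neg]
        · symm
          apply Finset.sum_eq_zero
          intro t _
          show (if (r t = ⟨xv,hxv⟩ ∧ c t = ⟨yv,hyv⟩) then (1:ℂ) else 0) = 0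
          rw [if_neg]
          rintro ⟨e1, e2⟩
          apply hP
          have ht := (memS t.1).mp t.2
          have hv1 : t.1.1 - (i-1) = xv := congrArg Fin.val e1
          have hv2 : (σ t.1).1 - (i-1) = yv := congrArg Fin.val e2
          have hteq : t.1 = ⟨i-1+xv,hx6⟩ := Fin.ext (show t.1.1 = i - 1 + xv by omega)
          rw [← hteq]
          constructor
          · omega
          · omega
        · rintro ⟨hl, he⟩
          apply hP
          refine ⟨congrArg Fin.val he, ?_⟩
          exact Fin.mk_lt_mk.mp hl
    rw [hmat, rank_sum_std r c hr hc, Fintype.card_coe]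
  · rw [dif_neg h, if_neg h]

/-- The entrywise min of the two relevant count matrices. -/
def Mc : ℕ → ℕ → ℕ := fun i j =>
  min (Rcount (Equiv.swap 1 2 * Equiv.swap 4 5) i j) (Rcount (Equiv.swap 0 1 * Equiv.swap 3 4) i j)

abbrev permA : Equiv.Perm (Fin 6) := Equiv.swap 0 2 * Equiv.swap 3 5
abbrev permB : Equiv.Perm (Fin 6) := Equiv.swap 0 5 * Equiv.swap 1 4

def L : List (Equiv.Perm (Fin 6)) :=
  [1, Equiv.swap 3 5, Equiv.swap 2 5, Equiv.swap 1 4, Equiv.swap 1 5,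
   Equiv.swap 0 2, permA, Equiv.swap 0 2 * Equiv.swap 1 5,
   Equiv.swap 0 3, Equiv.swap 0 3 * Equiv.swap 2 5, Equiv.swap 0 3 * Equiv.swap 1 5,
   Equiv.swap 0 4, Equiv.swap 0 4 * Equiv.swap 3 5, Equiv.swap 0 4 * Equiv.swap 2 5,
   Equiv.swap 0 4 * Equiv.swap 1 5, Equiv.swap 0 5, permB]

set_option maxRecDepth 1000000 in
lemma D1 : ∀ τ : Equiv.Perm (Fin 6), τ*τ=1 →
    ¬ (∀ i < 7, ∀ j < 7, Rcount τ i j = Mc i j) := by decide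

set_option maxRecDepth 1000000 in
lemma C1 : ∀ ρ : Equiv.Perm (Fin 6), ρ*ρ=1 →
    (∀ i < 7, ∀ j < 7, Rcount ρ i j ≤ Mc i j) → ρ ∈ L := by decide

set_option maxRecDepth 1000000 in
lemma C2 : ∀ ρ ∈ L, ρ*ρ=1 ∧ (∀ i < 7, ∀ j < 7, Rcount ρ i j ≤ Mc i j) := by decide

set_option maxRecDepth 1000000 in
lemma DS : ∀ τ ∈ L, τ ≠ permA → τ ≠ permB →
    ((∀ i < 7, ∀ j < 7, Rcount τ i j ≤ Rcount permA i j) ∧ permA ≠ τ) ∨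
    ((∀ i < 7, ∀ j < 7, Rcount τ i j ≤ Rcount permB i j) ∧ permB ≠ τ) := by decide

set_option maxRecDepth 1000000 in
lemma DB1 : ∀ ρ ∈ L, (∀ i < 7, ∀ j < 7, Rcount permA i j ≤ Rcount ρ i j) → ρ = permA := by decide

set_option maxRecDepth 1000000 in
lemma DB2 : ∀ ρ ∈ L, (∀ i < 7, ∀ j < 7, Rcount permB i j ≤ Rcount ρ i j) → ρ = permB := by decide

set_option maxRecDepth 1000000 in
lemma DmemA : permA ∈ L := by decide

set_option maxRecDepth 1000000 in
lemma DmemB : permB ∈ L := by decide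

/-- Extend a bounded comparison to all of ℕ. -/
lemma unbdd {ρ : Equiv.Perm (Fin 6)} {g : ℕ → ℕ → ℕ}
    (h : ∀ i < 7, ∀ j < 7, Rcount ρ i j ≤ g i j) : ∀ i j, Rcount ρ i j ≤ g i j := by
  intro i j
  by_cases hij : i < 7 ∧ j < 7
  · exact h i hij.1 j hij.2
  · rw [Rcount_zero _ _ _ (by omega)]
    exact Nat.zero_le _

lemma mem_commUT {n : ℕ} (N z : Matrix (Fin n) (Fin n) ℂ) :
    z ∈ commUT N ↔ UpperTri z ∧ z * N = N * z := Iff.rfl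

def NA : Matrix (Fin 6) (Fin 6) ℂ :=
  !![0,0,1,0,0,0; 0,0,0,0,0,0; 0,0,0,0,0,0; 0,0,0,0,0,1; 0,0,0,0,0,0; 0,0,0,0,0,0]

def NB : Matrix (Fin 6) (Fin 6) ℂ :=
  !![0,0,0,0,0,1; 0,0,0,0,1,0; 0,0,0,0,0,0; 0,0,0,0,0,0; 0,0,0,0,0,0; 0,0,0,0,0,0]

lemma NmatA : Nmat (Equiv.swap 0 2 * Equiv.swap 3 5 : Equiv.Perm (Fin 6)) = NA := by
  ext a b
  fin_cases a <;> fin_cases b <;>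
    simp [Nmat, NA, Equiv.swap_apply_def, Equiv.Perm.mul_apply] <;> decide

lemma NmatB : Nmat (Equiv.swap 0 5 * Equiv.swap 1 4 : Equiv.Perm (Fin 6)) = NB := by
  ext a b
  fin_cases a <;> fin_cases b <;>
    simp [Nmat, NB, Equiv.swap_apply_def, Equiv.Perm.mul_apply] <;> decide

set_option maxHeartbeats 2000000 in
def psiA : (Fin 15 → ℂ) →ₗ[ℂ] Matrix (Fin 6) (Fin 6) ℂ where
  toFun v := !![v 0, v 1, v 2, v 3, v 4, v 5;
                0,   v 6, v 7, 0,   v 8, v 9;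
                0,   0,   v 0, 0,   0,   v 3;
                0,   0,   0,   v 10, v 11, v 12;
                0,   0,   0,   0,   v 13, v 14;
                0,   0,   0,   0,   0,   v 10]
  map_add' u v := by ext a b; fin_cases a <;> fin_cases b <;> simp [vecHead, vecTail]
  map_smul' c v := by
    ext a b
    fin_cases a <;> fin_cases b <;> simp [vecHead, vecTail, smul_eq_mul, Matrix.smul_apply]

def phiA : Matrix (Fin 6) (Fin 6) ℂ →ₗ[ℂ] (Fin 15 → ℂ) where
  toFun z i := z (![0,0,0,0,0,0,1,1,1,1,3,3,3,4,4] i) (![0,1,2,3,4,5,1,2,4,5,3,4,5,4,5] i)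
  map_add' _ _ := rfl
  map_smul' _ _ := rfl

set_option maxHeartbeats 4000000 in
lemma memA (v : Fin 15 → ℂ) : psiA v ∈ commUT NA := by
  rw [mem_commUT]
  constructor
  · intro a b hba
    fin_cases a <;> fin_cases b <;>
      first
      | exact absurd hba (by decide)
      | simp [psiA, LinearMap.coe_mk, AddHom.coe_mk, vecHead, vecTail]
  · ext a b
    fin_cases a <;> fin_cases b <;>
      simp [psiA, LinearMap.coe_mk, AddHom.coe_mk, NA, Matrix.mul_apply, Fin.sum_univ_six,
        vecHead, vecTail]

lemma phiA_psiA (v : Fin 15 → ℂ) : phiA (psiA v) = v := by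
  funext i; fin_cases i <;> rfl

set_option maxHeartbeats 4000000 in
lemma psiA_phiA (z : Matrix (Fin 6) (Fin 6) ℂ) (hz : z ∈ commUT NA) : psiA (phiA z) = z := by
  obtain ⟨hu, hc⟩ := hz
  have h02 : z 0 0 = z 2 2 := by
    have := congrFun (congrFun hc 0) 2
    simpa [NA, Matrix.mul_apply, Fin.sum_univ_six, vecHead, vecTail, eq_comm] using this
  have h05 : z 0 3 = z 2 5 := by
    have := congrFun (congrFun hc 0) 5
    simpa [NA, Matrix.mul_apply, Fin.sum_univ_six, vecHead, vecTail, eq_comm] using this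
  have h15 : z 1 3 = 0 := by
    have := congrFun (congrFun hc 1) 5
    simpa [NA, Matrix.mul_apply, Fin.sum_univ_six, vecHead, vecTail, eq_comm] using this
  have h25 : z 2 3 = 0 := by
    have := congrFun (congrFun hc 2) 5
    simpa [NA, Matrix.mul_apply, Fin.sum_univ_six, vecHead, vecTail, eq_comm] using this
  have h35 : z 3 3 = z 5 5 := by
    have := congrFun (congrFun hc 3) 5
    simpa [NA, Matrix.mul_apply, Fin.sum_univ_six, vecHead, vecTail, eq_comm] using this
  have h04 : z 2 4 = 0 := by
    have := congrFun (congrFun hc 0) 4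
    simpa [NA, Matrix.mul_apply, Fin.sum_univ_six, vecHead, vecTail, eq_comm] using this
  ext a b
  fin_cases a <;> fin_cases b <;>
    simp only [psiA, phiA, LinearMap.coe_mk, AddHom.coe_mk] <;>
    simp [vecHead, vecTail] <;>
    first
    | rfl
    | exact h02 | exact h02.symm | exact h05 | exact h05.symm
    | exact h15 | exact h15.symm | exact h25 | exact h25.symm
    | exact h35 | exact h35.symm | exact h04 | exact h04.symm
    | exact (hu _ _ (by decide)) | exact (hu _ _ (by decide)).symm

noncomputable def eqA : (Fin 15 → ℂ) ≃ₗ[ℂ] ↥(commUT NA) :=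
  LinearEquiv.ofLinear (psiA.codRestrict (commUT NA) memA)
    (phiA ∘ₗ (commUT NA).subtype)
    (LinearMap.ext fun z => Subtype.ext (psiA_phiA z.1 z.2))
    (LinearMap.ext fun v => phiA_psiA v)

lemma finrankA : Module.finrank ℂ ↥(commUT NA) = 15 := by
  rw [← eqA.finrank_eq, Module.finrank_fin_fun]

set_option maxHeartbeats 2000000 in
def psiB : (Fin 17 → ℂ) →ₗ[ℂ] Matrix (Fin 6) (Fin 6) ℂ where
  toFun v := !![v 0, 0,   v 1, v 2, v 3, v 4;
                0,   v 5, v 6, v 7, v 8, v 9;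
                0,   0,   v 10, v 11, v 12, v 13;
                0,   0,   0,   v 14, v 15, v 16;
                0,   0,   0,   0,   v 5, 0;
                0,   0,   0,   0,   0,   v 0]
  map_add' u v := by ext a b; fin_cases a <;> fin_cases b <;> simp [vecHead, vecTail]
  map_smul' c v := by
    ext a b
    fin_cases a <;> fin_cases b <;> simp [vecHead, vecTail, smul_eq_mul, Matrix.smul_apply]

def phiB : Matrix (Fin 6) (Fin 6) ℂ →ₗ[ℂ] (Fin 17 → ℂ) where
  toFun z i := z (![0,0,0,0,0,1,1,1,1,1,2,2,2,2,3,3,3] i) (![0,2,3,4,5,1,2,3,4,5,2,3,4,5,3,4,5] i)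
  map_add' _ _ := rfl
  map_smul' _ _ := rfl

set_option maxHeartbeats 4000000 in
lemma memB (v : Fin 17 → ℂ) : psiB v ∈ commUT NB := by
  rw [mem_commUT]
  constructor
  · intro a b hba
    fin_cases a <;> fin_cases b <;>
      first
      | exact absurd hba (by decide)
      | simp [psiB, LinearMap.coe_mk, AddHom.coe_mk, vecHead, vecTail]
  · ext a b
    fin_cases a <;> fin_cases b <;>
      simp [psiB, LinearMap.coe_mk, AddHom.coe_mk, NB, Matrix.mul_apply, Fin.sum_univ_six,
        vecHead, vecTail]

lemma phiB_psiB (v : Fin 17 → ℂ) : phiB (psiB v) = v := by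
  funext i; fin_cases i <;> rfl

set_option maxHeartbeats 4000000 in
lemma psiB_phiB (z : Matrix (Fin 6) (Fin 6) ℂ) (hz : z ∈ commUT NB) : psiB (phiB z) = z := by
  obtain ⟨hu, hc⟩ := hz
  have hB1 : z 0 0 = z 5 5 := by
    have := congrFun (congrFun hc 0) 5
    simpa [NB, Matrix.mul_apply, Fin.sum_univ_six, vecHead, vecTail, eq_comm] using this
  have hB2 : z 4 5 = 0 := by
    have h := congrFun (congrFun hc 1) 5
    simp [NB, Matrix.mul_apply, Fin.sum_univ_six, vecHead, vecTail,
      hu 1 0 (by decide)] at h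
    first | exact h | exact h.symm
  have hB3 : z 0 1 = 0 := by
    have h := congrFun (congrFun hc 0) 4
    simp [NB, Matrix.mul_apply, Fin.sum_univ_six, vecHead, vecTail,
      hu 5 4 (by decide)] at h
    first | exact h | exact h.symm
  have hB4 : z 1 1 = z 4 4 := by
    have := congrFun (congrFun hc 1) 4
    simpa [NB, Matrix.mul_apply, Fin.sum_univ_six, vecHead, vecTail, eq_comm] using this
  ext a b
  fin_cases a <;> fin_cases b <;>
    simp only [psiB, phiB, LinearMap.coe_mk, AddHom.coe_mk] <;>
    simp [vecHead, vecTail] <;>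
    first
    | rfl
    | exact hB1 | exact hB1.symm | exact hB2 | exact hB2.symm
    | exact hB3 | exact hB3.symm | exact hB4 | exact hB4.symm
    | exact (hu _ _ (by decide)) | exact (hu _ _ (by decide)).symm

noncomputable def eqB : (Fin 17 → ℂ) ≃ₗ[ℂ] ↥(commUT NB) :=
  LinearEquiv.ofLinear (psiB.codRestrict (commUT NB) memB)
    (phiB ∘ₗ (commUT NB).subtype)
    (LinearMap.ext fun z => Subtype.ext (psiB_phiB z.1 z.2))
    (LinearMap.ext fun v => phiB_psiB v)

lemma finrankB : Module.finrank ℂ ↥(commUT NB) = 17 := by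
  rw [← eqB.finrank_eq, Module.finrank_fin_fun]

end Aux

/-- for `n = 6`, `σ = (2,3)(5,6)`, `σ' = (1,2)(4,5)`, the entrywise minimum
of the rank matrices is not a rank matrix; the maximal involutions below it are exactly
`(1,3)(4,6)` and `(1,6)(2,5)`, whose upper-triangular commutants have dimensions 15
and 17 (orbit dimensions 6 and 4). -/
theorem stmt18 :
    let σ : Equiv.Perm (Fin 6) := Equiv.swap 1 2 * Equiv.swap 4 5
    let σ' : Equiv.Perm (Fin 6) := Equiv.swap 0 1 * Equiv.swap 3 4
    let M : ℕ → ℕ → ℕ := fun i j => min (Rfun σ i j) (Rfun σ' i j)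
    (¬ ∃ τ : Equiv.Perm (Fin 6), IsInvol τ ∧ ∀ i j, Rfun τ i j = M i j) ∧
    (∀ τ : Equiv.Perm (Fin 6), IsInvol τ → (∀ i j, Rfun τ i j ≤ M i j) →
      ((∀ ρ : Equiv.Perm (Fin 6), IsInvol ρ → (∀ i j, Rfun ρ i j ≤ M i j) →
          (∀ i j, Rfun τ i j ≤ Rfun ρ i j) → ρ = τ) ↔
        (τ = Equiv.swap 0 2 * Equiv.swap 3 5 ∨ τ = Equiv.swap 0 5 * Equiv.swap 1 4))) ∧
    Module.finrank ℂ (commUT (Nmat (Equiv.swap 0 2 * Equiv.swap 3 5 : Equiv.Perm (Fin 6)))) = 15 ∧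
    Module.finrank ℂ (commUT (Nmat (Equiv.swap 0 5 * Equiv.swap 1 4 : Equiv.Perm (Fin 6)))) = 17 := by
  intro σ σ' M
  have hRR : ∀ (ρ : Equiv.Perm (Fin 6)) (i j : ℕ), Rfun ρ i j = Rcount ρ i j :=
    Rfun_eq_Rcount
  refine ⟨?_, ?_, ?_, ?_⟩
  · rintro ⟨τ, hτ, h⟩
    apply D1 τ hτ
    intro i _ j _
    have h2 : Rfun τ i j = min (Rfun (Equiv.swap 1 2 * Equiv.swap 4 5) i j)
        (Rfun (Equiv.swap 0 1 * Equiv.swap 3 4) i j) := h i j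
    simp only [hRR] at h2
    exact h2
  · intro τ hτinv hτle
    have hble : ∀ i < 7, ∀ j < 7, Rcount τ i j ≤ Mc i j := by
      intro i _ j _
      have h2 : Rfun τ i j ≤ min (Rfun (Equiv.swap 1 2 * Equiv.swap 4 5) i j)
          (Rfun (Equiv.swap 0 1 * Equiv.swap 3 4) i j) := hτle i j
      simp only [hRR] at h2
      exact h2
    have hτL : τ ∈ L := C1 τ hτinv hble
    constructor
    · intro hmax
      by_contra hne
      obtain ⟨hne1, hne2⟩ := not_or.mp hne
      have hMle : ∀ (ρ : Equiv.Perm (Fin 6)), ρ ∈ L → ∀ i j, Rfun ρ i j ≤ M i j := by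
        intro ρ hρ i j
        have h3 : Rcount ρ i j ≤ Mc i j := unbdd (C2 ρ hρ).2 i j
        show Rfun ρ i j ≤ min (Rfun (Equiv.swap 1 2 * Equiv.swap 4 5) i j)
          (Rfun (Equiv.swap 0 1 * Equiv.swap 3 4) i j)
        simp only [hRR]
        exact h3
      rcases DS τ hτL hne1 hne2 with ⟨hle, hneq⟩ | ⟨hle, hneq⟩
      · refine hneq (hmax permA (C2 permA DmemA).1 (hMle permA DmemA) ?_)
        intro i j
        simp only [hRR]
        exact unbdd hle i j
      · refine hneq (hmax permB (C2 permB DmemB).1 (hMle permB DmemB) ?_)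
        intro i j
        simp only [hRR]
        exact unbdd hle i j
    · intro hABor ρ hρinv hρle hτρ
      have hρble : ∀ i < 7, ∀ j < 7, Rcount ρ i j ≤ Mc i j := by
        intro i _ j _
        have h2 : Rfun ρ i j ≤ min (Rfun (Equiv.swap 1 2 * Equiv.swap 4 5) i j)
            (Rfun (Equiv.swap 0 1 * Equiv.swap 3 4) i j) := hρle i j
        simp only [hRR] at h2
        exact h2
      have hρL : ρ ∈ L := C1 ρ hρinv hρble
      have hbdd : ∀ i < 7, ∀ j < 7, Rcount τ i j ≤ Rcount ρ i j := by
        intro i _ j _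
        have h2 := hτρ i j
        simp only [hRR] at h2
        exact h2
      rcases hABor with rfl | rfl
      · exact DB1 ρ hρL hbdd
      · exact DB2 ρ hρL hbdd
  · rw [NmatA]
    exact finrankA
  · rw [NmatB]
    exact finrankB
end
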